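/- arXiv:2412.11316 — 13 statements merged into one kernel-verified Lean document; each statement's English description precedes it below -/
import Mathlib

section
/- Let (I,J,K) be a hypercomplex structure on R^{4k}, i.e. I,J,K are complex structures with IJ = -JI = K, and let h be a Lie subalgebra of gl(4k,R) commuting with I, J and K. Then: (1) every nonzero F ∈ h has rank at least 4 (in particular at least 3, so h is super-elliptic); (2) h ∩ Ih = {0}, i.e. h is totally real with respect to I. -/
attribute [local instance 100] LieRing.ofAssociativeRing

set_option maxHeartbeats 1000000 in
theorem stmt_1 {k : ℕ}
    (I J K : Module.End ℝ (Fin (4*k) → ℝ))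
    (hI : I * I = -1) (hJ : J * J = -1) (hK : K * K = -1)
    (hIJ : I * J = K) (hJI : J * I = -K)
    (h : LieSubalgebra ℝ (Module.End ℝ (Fin (4*k) → ℝ)))
    (hcI : ∀ F ∈ h, F * I = I * F) (hcJ : ∀ F ∈ h, F * J = J * F)
    (hcK : ∀ F ∈ h, F * K = K * F) :
    (∀ F ∈ h, F ≠ 0 → 4 ≤ Module.finrank ℝ ↥(LinearMap.range F)) ∧
    (∀ F ∈ h, ∀ G ∈ h, F = I * G → F = 0) := by
  -- derived quaternion relations
  have hKJ : K * J = -I := by rw [← hIJ, mul_assoc, hJ]; exact mul_neg_one I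
  have hIK : I * K = -J := by rw [← hIJ, ← mul_assoc, hI]; exact neg_one_mul J
  have hKI : K * I = J := by
    rw [← hIJ, mul_assoc, hJI]
    calc I * -K = -(I * K) := mul_neg I K
      _ = J := by rw [hIK, neg_neg]
  have hJK : J * K = I := by
    rw [← hIJ, ← mul_assoc, hJI]
    calc -K * J = -(K * J) := neg_mul K J
      _ = I := by rw [hKJ, neg_neg]
  constructor
  · intro F hF hF0
    obtain ⟨u, hu⟩ : ∃ u, F u ≠ 0 := by
      by_contra hc
      push_neg at hc
      exact hF0 (LinearMap.ext fun x => by simpa using hc x)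
    set v : Fin (4*k) → ℝ := F u with hv
    have hvW : v ∈ LinearMap.range F := ⟨u, rfl⟩
    have hIv : I v ∈ LinearMap.range F := ⟨I u, by
      simpa [Module.End.mul_apply] using LinearMap.congr_fun (hcI F hF) u⟩
    have hJv : J v ∈ LinearMap.range F := ⟨J u, by
      simpa [Module.End.mul_apply] using LinearMap.congr_fun (hcJ F hF) u⟩
    have hKv : K v ∈ LinearMap.range F := ⟨K u, by
      simpa [Module.End.mul_apply] using LinearMap.congr_fun (hcK F hF) u⟩
    -- endomorphism facts applied to v
    have eII : I (I v) = -v := by simpa [Module.End.mul_apply] using LinearMap.congr_fun hI v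
    have eJJ : J (J v) = -v := by simpa [Module.End.mul_apply] using LinearMap.congr_fun hJ v
    have eKK : K (K v) = -v := by simpa [Module.End.mul_apply] using LinearMap.congr_fun hK v
    have eIJ : I (J v) = K v := by simpa [Module.End.mul_apply] using LinearMap.congr_fun hIJ v
    have eJI : J (I v) = -(K v) := by simpa [Module.End.mul_apply] using LinearMap.congr_fun hJI v
    have eKJ : K (J v) = -(I v) := by simpa [Module.End.mul_apply] using LinearMap.congr_fun hKJ v
    have eIK : I (K v) = -(J v) := by simpa [Module.End.mul_apply] using LinearMap.congr_fun hIK v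
    have eKI : K (I v) = J v := by simpa [Module.End.mul_apply] using LinearMap.congr_fun hKI v
    have eJK : J (K v) = I v := by simpa [Module.End.mul_apply] using LinearMap.congr_fun hJK v
    -- linear independence of v, Iv, Jv, Kv
    have hli : LinearIndependent ℝ ![v, I v, J v, K v] := by
      rw [Fintype.linearIndependent_iff]
      intro g hg
      rw [Fin.sum_univ_four] at hg
      simp only [Matrix.cons_val_zero, Matrix.cons_val_one, Matrix.head_cons,
        Matrix.cons_val_two, Matrix.tail_cons, Matrix.cons_val_three] at hg
      set a := g 0 with ha'; set b := g 1 with hb'; set c := g 2 with hc'; set d := g 3 with hd'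
      have h1 : a • I v + b • (-v) + c • K v + d • (-(J v)) = 0 := by
        have := congrArg I hg
        simpa [map_add, map_smul, eII, eIJ, eIK] using this
      have h2 : a • J v + b • (-(K v)) + c • (-v) + d • I v = 0 := by
        have := congrArg J hg
        simpa [map_add, map_smul, eJI, eJJ, eJK] using this
      have h3 : a • K v + b • J v + c • (-(I v)) + d • (-v) = 0 := by
        have := congrArg K hg
        simpa [map_add, map_smul, eKI, eKJ, eKK] using this
      have hsum : (a^2 + b^2 + c^2 + d^2) • v = 0 := by
        have key : (a^2 + b^2 + c^2 + d^2) • v =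
            a • (a • v + b • I v + c • J v + d • K v)
            - b • (a • I v + b • (-v) + c • K v + d • (-(J v)))
            - c • (a • J v + b • (-(K v)) + c • (-v) + d • I v)
            - d • (a • K v + b • J v + c • (-(I v)) + d • (-v)) := by
          module
        rw [key, hg, h1, h2, h3]
        simp
      have hcoef : a^2 + b^2 + c^2 + d^2 = 0 := by
        rcases smul_eq_zero.mp hsum with hh | hh
        · exact hh
        · exact absurd hh hu
      have ha : a = 0 := by nlinarith [sq_nonneg a, sq_nonneg b, sq_nonneg c, sq_nonneg d]
      have hb : b = 0 := by nlinarith [sq_nonneg a, sq_nonneg b, sq_nonneg c, sq_nonneg d]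
      have hcc : c = 0 := by nlinarith [sq_nonneg a, sq_nonneg b, sq_nonneg c, sq_nonneg d]
      have hd : d = 0 := by nlinarith [sq_nonneg a, sq_nonneg b, sq_nonneg c, sq_nonneg d]
      intro i
      fin_cases i <;> assumption
    -- pass to span and compare with the range
    have hspan : Submodule.span ℝ (Set.range ![v, I v, J v, K v]) ≤ LinearMap.range F := by
      rw [Submodule.span_le]
      rintro x ⟨i, rfl⟩
      fin_cases i <;> assumption
    have hrank : Module.finrank ℝ ↥(Submodule.span ℝ (Set.range ![v, I v, J v, K v])) = 4 := by
      rw [finrank_span_eq_card hli]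
      simp
    calc (4 : ℕ) = Module.finrank ℝ ↥(Submodule.span ℝ (Set.range ![v, I v, J v, K v])) :=
          hrank.symm
      _ ≤ Module.finrank ℝ ↥(LinearMap.range F) := Submodule.finrank_mono hspan
  · intro F hF G hG hFG
    have h1 : F * J = K * G := by rw [hFG, mul_assoc, hcJ G hG, ← mul_assoc, hIJ]
    have h2 : J * F = -(K * G) := by
      rw [hFG, ← mul_assoc, hJI]; exact neg_mul K G
    have h3 : K * G = -(K * G) :=
      calc K * G = F * J := h1.symm
        _ = J * F := hcJ F hF
        _ = -(K * G) := h2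
    have hKG : K * G = 0 := by
      have h4 : K * G + K * G = 0 := by nth_rewrite 1 [h3]; simp
      have h5 : (2 : ℝ) • (K * G) = 0 := by rw [two_smul]; exact h4
      simpa using smul_eq_zero.mp h5
    have hG0 : G = 0 := by
      have h6 : K * (K * G) = 0 := by rw [hKG, mul_zero]
      rw [← mul_assoc, hK] at h6
      have h7 : -G = 0 := (neg_one_mul G).symm.trans h6
      exact neg_eq_zero.mp h7
    rw [hFG, hG0, mul_zero]
end

section
/- Let g be a nondegenerate symmetric bilinear form on R^n, let h ⊆ so(g) be a Lie subalgebra of g-skew-symmetric endomorphisms, and suppose h is super-elliptic (contains no nonzero element of rank ≤ 2). Then the first prolongation of the tableau K_h = {F restricted to R^{n-1} : F ∈ h} vanishes: every symmetric bilinear map ∇ : R^{n-1} × R^{n-1} → R^n such that for each u ∈ R^{n-1} the map ∇_u extends to an element of h is zero. -/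
attribute [local instance 100] LieRing.ofAssociativeRing

theorem stmt_3 {n : ℕ}
    (g : (Fin (n+1) → ℝ) →ₗ[ℝ] (Fin (n+1) → ℝ) →ₗ[ℝ] ℝ)
    (hnd : ∀ x, (∀ y, g x y = 0) → x = 0)
    (hsymm : ∀ x y, g x y = g y x)
    (h : LieSubalgebra ℝ (Module.End ℝ (Fin (n+1) → ℝ)))
    (hskew : ∀ F ∈ h, ∀ x y, g (F x) y = - g x (F y))
    (hse : ∀ F ∈ h, Module.finrank ℝ ↥(LinearMap.range F) ≤ 2 → F = 0)
    (P : Submodule ℝ (Fin (n+1) → ℝ))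
    (hP : P = LinearMap.ker (LinearMap.proj (Fin.last n) : (Fin (n+1) → ℝ) →ₗ[ℝ] ℝ))
    (D : P →ₗ[ℝ] P →ₗ[ℝ] (Fin (n+1) → ℝ))
    (hsymD : ∀ u w : P, D u w = D w u)
    (hext : ∀ u : P, ∃ F ∈ h, ∀ w : P, F (w : Fin (n+1) → ℝ) = D u w) :
    D = 0 := by
  classical
  -- key antisymmetry
  have key : ∀ u v w : P, g (D u v) (w : (Fin (n+1) → ℝ)) = - g (D u w) (v : (Fin (n+1) → ℝ)) := by
    intro u v w
    obtain ⟨F, hF, hFw⟩ := hext u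
    rw [← hFw v, ← hFw w, hskew F hF]
    rw [hsymm]
  -- Step A : D u v is orthogonal to P
  have hA : ∀ u v w : P, g (D u v) (w : (Fin (n+1) → ℝ)) = 0 := by
    intro u v w
    have chain : g (D u v) (w : (Fin (n+1) → ℝ)) = - g (D u v) (w : (Fin (n+1) → ℝ)) := by
      calc g (D u v) (w : (Fin (n+1) → ℝ)) = g (D v u) (w : (Fin (n+1) → ℝ)) := by rw [hsymD]
        _ = - g (D v w) (u : (Fin (n+1) → ℝ)) := key v u w
        _ = - g (D w v) (u : (Fin (n+1) → ℝ)) := by rw [hsymD]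
        _ = g (D w u) (v : (Fin (n+1) → ℝ)) := by rw [key w v u]; ring
        _ = g (D u w) (v : (Fin (n+1) → ℝ)) := by rw [hsymD]
        _ = - g (D u v) (w : (Fin (n+1) → ℝ)) := key u w v
    linarith
  -- the distinguished vector
  set e : (Fin (n+1) → ℝ) := Pi.single (Fin.last n) (1:ℝ) with he
  have hmemP : ∀ x : (Fin (n+1) → ℝ), x ∈ P ↔ x (Fin.last n) = 0 := by
    intro x
    rw [hP, LinearMap.mem_ker, LinearMap.proj_apply]
  have hdec : ∀ x : (Fin (n+1) → ℝ), ∃ p ∈ P, x = p + x (Fin.last n) • e := by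
    intro x
    refine ⟨x - x (Fin.last n) • e, ?_, by ring⟩
    rw [hmemP]
    simp [he, Pi.single_eq_same]
  -- the orthogonal complement of P
  set Φ : (Fin (n+1) → ℝ) →ₗ[ℝ] (P →ₗ[ℝ] ℝ) := g.compl₂ P.subtype with hΦ
  set Q : Submodule ℝ (Fin (n+1) → ℝ) := LinearMap.ker Φ with hQ
  have hmemQ : ∀ y : (Fin (n+1) → ℝ), y ∈ Q ↔ ∀ w : P, g y (w : (Fin (n+1) → ℝ)) = 0 := by
    intro y
    rw [hQ, LinearMap.mem_ker]
    constructor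
    · intro hy w
      have := congrArg (fun f => f w) hy
      simpa [hΦ] using this
    · intro hy
      ext w
      simpa [hΦ] using hy w
  -- Q has dimension at most 1
  have hQ1 : Module.finrank ℝ Q ≤ 1 := by
    set ψ : Q →ₗ[ℝ] ℝ := (g.flip e).comp Q.subtype with hψ
    have hinj : Function.Injective ψ := by
      rw [← LinearMap.ker_eq_bot]
      rw [Submodule.eq_bot_iff]
      rintro ⟨y, hy⟩ hyk
      have hye : g y e = 0 := by
        simpa [hψ, LinearMap.flip_apply] using hyk
      have hall : ∀ x : (Fin (n+1) → ℝ), g y x = 0 := by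
        intro x
        obtain ⟨p, hp, hx⟩ := hdec x
        have h1 : g y p = 0 := (hmemQ y).mp hy ⟨p, hp⟩
        rw [hx]
        simp [h1, hye]
      have : y = 0 := hnd y hall
      simpa using this
    simpa using LinearMap.finrank_le_finrank_of_injective hinj
  -- D u = 0 for every u
  have hDu : ∀ u : P, D u = 0 := by
    intro u
    obtain ⟨F, hF, hFw⟩ := hext u
    have hrange : LinearMap.range F ≤ (Submodule.span ℝ {F e}) ⊔ Q := by
      rintro y ⟨x, rfl⟩
      obtain ⟨p, hp, hx⟩ := hdec x
      rw [hx]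
      have hFp : F p ∈ Q := by
        rw [hmemQ]
        intro w
        have : F p = D u ⟨p, hp⟩ := hFw ⟨p, hp⟩
        rw [this]
        exact hA u ⟨p, hp⟩ w
      have h1 : F (p + x (Fin.last n) • e) = F p + x (Fin.last n) • F e := by
        rw [map_add, map_smul]
      rw [h1]
      exact Submodule.add_mem _ (Submodule.mem_sup_right hFp)
        (Submodule.mem_sup_left (Submodule.smul_mem _ _ (Submodule.mem_span_singleton_self _)))
    have hspan1 : Module.finrank ℝ (Submodule.span ℝ {F e}) ≤ 1 := by
      by_cases hFe : F e = 0
      · rw [hFe, Submodule.span_zero_singleton]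
        exact le_of_eq_of_le (by simp) zero_le_one
      · rw [finrank_span_singleton hFe]
    have hrk : Module.finrank ℝ ↥(LinearMap.range F) ≤ 2 := by
      calc Module.finrank ℝ ↥(LinearMap.range F)
          ≤ Module.finrank ℝ ↥((Submodule.span ℝ {F e}) ⊔ Q) :=
            Submodule.finrank_mono hrange
        _ ≤ Module.finrank ℝ (Submodule.span ℝ {F e}) + Module.finrank ℝ Q :=
            Submodule.finrank_add_le_finrank_add_finrank _ _
        _ ≤ 1 + 1 := add_le_add hspan1 hQ1
    have hF0 : F = 0 := hse F hF hrk
    ext w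
    rw [← hFw w, hF0]
    rfl
  exact LinearMap.ext fun u => hDu u
end

section
/- Let g be a nondegenerate symmetric bilinear form on R^n such that the restriction of g to R^{n-1} (span of first n-1 standard basis vectors) is nondegenerate, and let h ⊆ so(g) be a Lie subalgebra. Then there is a linear subspace U of (R^{n-1})* such that the first prolongation of the tableau K_h equals S^2 U ⊗ span(v), where v is a nonzero vector spanning the g-orthogonal complement of R^{n-1}. In particular, every element ∇ of K_h^{(1)} satisfies ∇_u w ∈ span(v) for all u,w ∈ R^{n-1}. -/
attribute [local instance 100] LieRing.ofAssociativeRing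

set_option maxHeartbeats 2000000 in
theorem stmt_4 {n : ℕ}
    (g : (Fin (n+1) → ℝ) →ₗ[ℝ] (Fin (n+1) → ℝ) →ₗ[ℝ] ℝ)
    (hnd : ∀ x, (∀ y, g x y = 0) → x = 0)
    (hsymm : ∀ x y, g x y = g y x)
    (h : LieSubalgebra ℝ (Module.End ℝ (Fin (n+1) → ℝ)))
    (hskew : ∀ F ∈ h, ∀ x y, g (F x) y = - g x (F y))
    (P : Submodule ℝ (Fin (n+1) → ℝ))
    (hP : P = LinearMap.ker (LinearMap.proj (Fin.last n) : (Fin (n+1) → ℝ) →ₗ[ℝ] ℝ))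
    (hPnd : ∀ x ∈ P, (∀ y ∈ P, g x y = 0) → x = 0)
    (v : Fin (n+1) → ℝ) (hv0 : v ≠ 0) (hvperp : ∀ y ∈ P, g v y = 0) :
    ∃ U : Submodule ℝ (P →ₗ[ℝ] ℝ),
      ∀ D : P →ₗ[ℝ] P →ₗ[ℝ] (Fin (n+1) → ℝ), (∀ u w : P, D u w = D w u) →
        ((∀ u : P, ∃ F ∈ h, ∀ w : P, F (w : Fin (n+1) → ℝ) = D u w) ↔
          ∃ B : P →ₗ[ℝ] P →ₗ[ℝ] ℝ, (∀ u w : P, B u w = B w u) ∧ (∀ u : P, B u ∈ U) ∧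
            ∀ u w : P, D u w = B u w • v) := by
  classical
  let E := Fin (n+1) → ℝ
  -- v is not in P
  have hvP : v ∉ P := fun hvP => hv0 (hPnd v hvP hvperp)
  have hlast : ∀ x : E, x ∈ P ↔ x (Fin.last n) = 0 := by
    intro x; rw [hP, LinearMap.mem_ker]; rfl
  have hvlast : v (Fin.last n) ≠ 0 := fun h0 => hvP ((hlast v).mpr h0)
  have hwlast : ∀ w : P, (w : E) (Fin.last n) = 0 := fun w => (hlast _).mp w.2
  -- the coefficient functional
  set t : E →ₗ[ℝ] ℝ := (v (Fin.last n))⁻¹ • (LinearMap.proj (Fin.last n)) with ht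
  have htapp : ∀ x : E, t x = (v (Fin.last n))⁻¹ * x (Fin.last n) := fun x => rfl
  have htv : t v = 1 := by rw [htapp, inv_mul_cancel₀ hvlast]
  have htw : ∀ w : P, t w = 0 := fun w => by rw [htapp, hwlast, mul_zero]
  have hmem : ∀ x : E, x - t x • v ∈ P := by
    intro x
    rw [hlast]
    show x (Fin.last n) - t x * v (Fin.last n) = 0
    rw [htapp]
    field_simp
    ring
  -- projection onto P
  set pr : E →ₗ[ℝ] P :=
    LinearMap.codRestrict P (LinearMap.id - (t.smulRight v)) hmem with hpr
  have hprapp : ∀ x : E, ((pr x : E)) = x - t x • v := fun x => rfl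
  have hdecomp : ∀ x : E, x = (pr x : E) + t x • v := by
    intro x; rw [hprapp]; abel
  have hprv : (pr v : E) = 0 := by rw [hprapp, htv, one_smul, sub_self]
  have hprw : ∀ w : P, pr (w : E) = w := by
    intro w; apply Subtype.ext; rw [hprapp, htw, zero_smul, sub_zero]
  -- g v v ≠ 0
  have hgvv : g v v ≠ 0 := by
    intro h0
    apply hv0
    apply hnd
    intro y
    have h1 := hvperp _ (hmem y)
    have h2 : g v (y - t y • v) = g v y - t y * g v v := by
      rw [map_sub, map_smul]; rfl
    rw [h2, h0, mul_zero, sub_zero] at h1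
    exact h1
  -- Riesz representation for g restricted to P
  set φ : P →ₗ[ℝ] (P →ₗ[ℝ] ℝ) := (g.domRestrict P).compl₂ P.subtype with hφdef
  have hφ : ∀ p w : P, φ p w = g (p : E) (w : E) := fun p w => rfl
  have hφinj : Function.Injective φ := by
    intro p q hpq
    have : ((p - q : P) : E) = 0 := by
      apply hPnd _ (p - q).2
      intro y hy
      have h1 : φ (p - q) ⟨y, hy⟩ = 0 := by rw [map_sub, hpq, sub_self]; rfl
      rw [hφ] at h1
      exact h1
    have : p - q = 0 := Subtype.ext this
    exact sub_eq_zero.mp this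
  have hrank : Module.finrank ℝ P = Module.finrank ℝ (P →ₗ[ℝ] ℝ) :=
    (Subspace.dual_finrank_eq (K := ℝ) (V := P)).symm
  have hφbij : Function.Bijective φ :=
    ⟨hφinj, (LinearMap.injective_iff_surjective_of_finrank_eq_finrank hrank).mp hφinj⟩
  set e : P ≃ₗ[ℝ] (P →ₗ[ℝ] ℝ) := LinearEquiv.ofBijective φ hφbij with hedef
  have hψ : ∀ (l : P →ₗ[ℝ] ℝ) (w : P), g ((e.symm l : P) : E) (w : E) = l w := by
    intro l w
    have h1 : φ (e.symm l) = l := e.apply_symm_apply l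
    rw [← hφ, h1]
  -- the model skew endomorphisms
  set Fl : (P →ₗ[ℝ] ℝ) → Module.End ℝ E := fun l =>
    (l.comp pr).smulRight v - ((g v v) • t).smulRight ((e.symm l : P) : E) with hFldef
  have hFlapp : ∀ (l : P →ₗ[ℝ] ℝ) (x : E),
      Fl l x = l (pr x) • v - (g v v * t x) • ((e.symm l : P) : E) := by
    intro l x
    simp [hFldef, LinearMap.smulRight_apply, mul_comm, smul_smul]
  have hFlw : ∀ (l : P →ₗ[ℝ] ℝ) (w : P), Fl l (w : E) = l w • v := by
    intro l w
    rw [hFlapp, hprw, htw, mul_zero, zero_smul, sub_zero]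
  have hFlv : ∀ (l : P →ₗ[ℝ] ℝ), Fl l v = -(g v v • ((e.symm l : P) : E)) := by
    intro l
    rw [hFlapp, htv, mul_one]
    have : pr v = 0 := Subtype.ext (by rw [hprv]; rfl)
    rw [this, map_zero, zero_smul, zero_sub]
  -- the subspace U
  refine ⟨{ carrier := {l | Fl l ∈ h}
            add_mem' := ?_
            zero_mem' := ?_
            smul_mem' := ?_ }, ?_⟩
  · intro a b ha hb
    have : Fl (a + b) = Fl a + Fl b := by
      apply LinearMap.ext; intro x
      rw [LinearMap.add_apply, hFlapp, hFlapp, hFlapp, map_add, LinearMap.add_apply,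
        Submodule.coe_add]
      module
    show Fl (a + b) ∈ h
    rw [this]; exact h.add_mem ha hb
  · have : Fl 0 = 0 := by
      apply LinearMap.ext; intro x
      rw [hFlapp, map_zero]
      simp
    show Fl 0 ∈ h
    rw [this]; exact h.zero_mem
  · intro c a ha
    have : Fl (c • a) = c • Fl a := by
      apply LinearMap.ext; intro x
      rw [LinearMap.smul_apply, hFlapp, hFlapp, map_smul, LinearMap.smul_apply,
        Submodule.coe_smul]
      simp only [smul_eq_mul]
      module
    show Fl (c • a) ∈ h
    rw [this]; exact h.smul_mem c ha
  -- main equivalence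
  intro D hDsymm
  constructor
  · intro hprol
    choose F hFh hFe using hprol
    have skew : ∀ u w y : P, g (D u w) (y : E) = - g (D u y) (w : E) := by
      intro u w y
      have h1 := hskew (F u) (hFh u) (w : E) (y : E)
      rw [hFe u w, hFe u y] at h1
      rw [h1, hsymm]
    have hperp : ∀ u w y : P, g (D u w) (y : E) = 0 := by
      intro u w y
      have e1 : g (D u w) (y : E) = - g (D u w) (y : E) := by
        calc g (D u w) (y : E) = g (D w u) (y : E) := by rw [hDsymm]
        _ = - g (D w y) (u : E) := skew w u y
        _ = - g (D y w) (u : E) := by rw [hDsymm w y]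
        _ = g (D y u) (w : E) := (skew y u w).symm
        _ = g (D u y) (w : E) := by rw [hDsymm y u]
        _ = - g (D u w) (y : E) := skew u y w
      exact add_self_eq_zero.mp (eq_neg_iff_add_eq_zero.mp e1)
    have hspan : ∀ u w : P, D u w = t (D u w) • v := by
      intro u w
      have hz : D u w - t (D u w) • v = 0 := by
        apply hPnd _ (hmem (D u w))
        intro y hy
        have h1 : g (D u w - t (D u w) • v) y = g (D u w) y - t (D u w) * g v y := by
          rw [map_sub, map_smul]; rfl
        rw [h1, hperp u w ⟨y, hy⟩, hvperp y hy, mul_zero, sub_zero]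
      exact sub_eq_zero.mp hz
    refine ⟨D.compr₂ t, ?_, ?_, ?_⟩
    · intro u w
      simp only [LinearMap.compr₂_apply]
      rw [hDsymm]
    · intro u
      set l : P →ₗ[ℝ] ℝ := (D.compr₂ t) u with hl
      have hlw : ∀ w : P, l w = t (D u w) := fun w => rfl
      show Fl l ∈ h
      have hFw : ∀ w : P, F u (w : E) = l w • v := by
        intro w
        rw [hFe u w, hlw, ← hspan u w]
      have hFv : (F u) v = Fl l v := by
        have key : ∀ y : E, g ((F u) v - Fl l v) y = 0 := by
          intro y
          have hP1 : g ((F u) v - Fl l v) ((pr y : P) : E) = 0 := by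
            have a1 : g ((F u) v) ((pr y : P) : E) = -(l (pr y) * g v v) := by
              rw [hskew (F u) (hFh u) v ((pr y : P) : E), hFw (pr y), map_smul]
              simp [smul_eq_mul]
            have a2 : g (Fl l v) ((pr y : P) : E) = -(g v v * l (pr y)) := by
              rw [hFlv]
              simp only [map_neg, map_smul, LinearMap.neg_apply, LinearMap.smul_apply,
                smul_eq_mul, hψ]
            have hsub : g ((F u) v - Fl l v) ((pr y : P) : E)
                = g ((F u) v) ((pr y : P) : E) - g (Fl l v) ((pr y : P) : E) := by
              rw [map_sub]; rfl
            rw [hsub, a1, a2]; ring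
          have hP2 : g ((F u) v - Fl l v) v = 0 := by
            have b1 : g ((F u) v) v = 0 := by
              have c1 := hskew (F u) (hFh u) v v
              rw [hsymm v ((F u) v)] at c1
              exact add_self_eq_zero.mp (eq_neg_iff_add_eq_zero.mp c1)
            have b2 : g (Fl l v) v = 0 := by
              rw [hFlv]
              have c3 : g (((e.symm l : P)) : E) v = 0 := by
                rw [hsymm]; exact hvperp _ (e.symm l).2
              simp only [map_neg, map_smul, LinearMap.neg_apply, LinearMap.smul_apply,
                smul_eq_mul, c3, mul_zero, neg_zero]
            have hsub : g ((F u) v - Fl l v) v = g ((F u) v) v - g (Fl l v) v := by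
              rw [map_sub]; rfl
            rw [hsub, b1, b2, sub_zero]
          calc g ((F u) v - Fl l v) y
              = g ((F u) v - Fl l v) (((pr y : P) : E) + t y • v) := by rw [← hdecomp]
            _ = g ((F u) v - Fl l v) ((pr y : P) : E)
                + t y * g ((F u) v - Fl l v) v := by rw [map_add, map_smul]; rfl
            _ = 0 := by rw [hP1, hP2]; ring
        exact sub_eq_zero.mp (hnd _ key)
      have hFeq : F u = Fl l := by
        apply LinearMap.ext; intro x
        calc (F u) x = (F u) (((pr x : P) : E) + t x • v) := by rw [← hdecomp]
          _ = l (pr x) • v + t x • (F u) v := by rw [map_add, map_smul, hFw]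
          _ = l (pr x) • v + t x • Fl l v := by rw [hFv]
          _ = Fl l x := by rw [hFlv, hFlapp]; module
      exact hFeq ▸ hFh u
    · intro u w
      exact hspan u w
  · rintro ⟨B, hBsymm, hBU, hBD⟩ u
    exact ⟨Fl (B u), hBU u, fun w => by rw [hFlw]; exact (hBD u w).symm⟩
end

section
/- Let J be a complex structure on R^{2m} and h ⊆ gl(J) a totally real Lie subalgebra (h ∩ Jh = {0}). Let W = R^{2m-1} ∩ J(R^{2m-1}) where R^{2m-1} is the span of the first 2m-1 standard basis vectors. Then every element of the first prolongation K_h^{(1)} of the tableau K_h vanishes on W in both arguments; i.e., K_h^{(1)} ⊆ S^2(W^0) ⊗ R^{2m}, where W^0 ⊆ (R^{2m-1})* is the annihilator of W. -/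
attribute [local instance 100] LieRing.ofAssociativeRing

theorem stmt_5 {m : ℕ}
    (J : Module.End ℝ (Fin (2*m+2) → ℝ)) (hJ : J * J = -1)
    (h : LieSubalgebra ℝ (Module.End ℝ (Fin (2*m+2) → ℝ)))
    (hcomm : ∀ F ∈ h, F * J = J * F)
    (htr : ∀ F ∈ h, ∀ G ∈ h, F = J * G → F = 0)
    (P : Submodule ℝ (Fin (2*m+2) → ℝ))
    (hP : P = LinearMap.ker
      (LinearMap.proj (⟨2*m+1, by omega⟩ : Fin (2*m+2)) : (Fin (2*m+2) → ℝ) →ₗ[ℝ] ℝ))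
    (D : P →ₗ[ℝ] P →ₗ[ℝ] (Fin (2*m+2) → ℝ))
    (hsymD : ∀ u w : P, D u w = D w u)
    (hext : ∀ u : P, ∃ F ∈ h, ∀ w : P, F (w : Fin (2*m+2) → ℝ) = D u w) :
    ∀ u : P, J (u : Fin (2*m+2) → ℝ) ∈ P → ∀ w : P, D u w = 0 := by
  have hJ2 : ∀ x : Fin (2*m+2) → ℝ, J (J x) = -x := by
    intro x
    have := LinearMap.ext_iff.1 hJ x
    simpa [Module.End.mul_apply] using this
  have hrank : Module.finrank ℝ P = 2*m+1 := by
    rw [hP]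
    have hsurj : Function.Surjective
        ((LinearMap.proj (⟨2*m+1, by omega⟩ : Fin (2*m+2)) :
          (Fin (2*m+2) → ℝ) →ₗ[ℝ] ℝ)) := fun r => ⟨fun _ => r, rfl⟩
    have h1 := LinearMap.finrank_range_add_finrank_ker
      ((LinearMap.proj (⟨2*m+1, by omega⟩ : Fin (2*m+2)) :
        (Fin (2*m+2) → ℝ) →ₗ[ℝ] ℝ))
    rw [LinearMap.range_eq_top.2 hsurj] at h1
    simp [Module.finrank_fin_fun] at h1
    omega
  have htop : P ⊔ P.map J = ⊤ := by
    by_contra hne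
    have hlt : P ⊔ P.map J < ⊤ := lt_top_iff_ne_top.2 hne
    have h1 : Module.finrank ℝ ↥(P ⊔ P.map J) < 2*m+2 := by
      have := Submodule.finrank_lt (K := ℝ) (V := Fin (2*m+2) → ℝ) hlt.ne
      simpa [Module.finrank_fin_fun] using this
    have h2 : 2*m+1 ≤ Module.finrank ℝ ↥(P ⊔ P.map J) :=
      hrank ▸ Submodule.finrank_mono le_sup_left
    have heq : P = P ⊔ P.map J :=
      Submodule.eq_of_le_of_finrank_le le_sup_left (by omega)
    have hmaps : ∀ x ∈ P, J x ∈ P := by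
      intro x hx
      have hmem : J x ∈ P ⊔ P.map J :=
        Submodule.mem_sup_right (Submodule.mem_map_of_mem hx)
      rwa [← heq] at hmem
    set Jr : P →ₗ[ℝ] P := J.restrict hmaps with hJrdef
    have hJr2 : Jr * Jr = -1 := by
      refine LinearMap.ext fun p => Subtype.ext ?_
      simp [hJrdef, Module.End.mul_apply, LinearMap.restrict_coe_apply, hJ2]
    have hd : LinearMap.det Jr * LinearMap.det Jr = (-1 : ℝ) := by
      have h3 : LinearMap.det (Jr * Jr) = LinearMap.det Jr * LinearMap.det Jr :=
        map_mul _ _ _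
      rw [hJr2] at h3
      rw [← h3]
      have h4 : (-1 : Module.End ℝ P) = (-1 : ℝ) • (LinearMap.id : P →ₗ[ℝ] P) := by
        refine LinearMap.ext fun p => ?_
        simp
      rw [h4, LinearMap.det_smul, LinearMap.det_id, mul_one, hrank]
      exact Odd.neg_one_pow ⟨m, by ring⟩
    nlinarith [mul_self_nonneg (LinearMap.det Jr)]
  intro u hu w
  obtain ⟨F, hF, hFs⟩ := hext u
  obtain ⟨G, hG, hGs⟩ := hext ⟨J u, hu⟩
  have key : ∀ p : P, G p = J (F p) := by
    intro p
    obtain ⟨Fp, hFp, hFps⟩ := hext p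
    have hc : Fp (J (u : Fin (2*m+2) → ℝ)) = J (Fp u) := by
      have := LinearMap.ext_iff.1 (hcomm Fp hFp) (u : Fin (2*m+2) → ℝ)
      simpa [Module.End.mul_apply] using this
    calc G p = D ⟨J u, hu⟩ p := hGs p
      _ = D p ⟨J u, hu⟩ := by rw [hsymD]
      _ = Fp (J (u : Fin (2*m+2) → ℝ)) := (hFps ⟨J u, hu⟩).symm
      _ = J (Fp u) := hc
      _ = J (D p u) := by rw [hFps u]
      _ = J (D u p) := by rw [hsymD]
      _ = J (F p) := by rw [hFs p]
  have hcF : ∀ x, F (J x) = J (F x) := by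
    intro x
    have := LinearMap.ext_iff.1 (hcomm F hF) x
    simpa [Module.End.mul_apply] using this
  have hcG : ∀ x, G (J x) = J (G x) := by
    intro x
    have := LinearMap.ext_iff.1 (hcomm G hG) x
    simpa [Module.End.mul_apply] using this
  have hGJ : G = J * F := by
    refine LinearMap.ext fun x => ?_
    have hx : x ∈ P ⊔ P.map J := htop ▸ Submodule.mem_top
    obtain ⟨p, hp, q, hq, hpq⟩ := Submodule.mem_sup.1 hx
    obtain ⟨p', hp', rfl⟩ := hq
    have e1 : G p = J (F p) := key ⟨p, hp⟩
    have e2 : G p' = J (F p') := key ⟨p', hp'⟩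
    show G x = J (F x)
    rw [← hpq]
    rw [map_add, map_add, map_add, hcG, hcF, e1, e2]
  have hG0 : G = 0 := htr G hG F hF hGJ
  have hF0 : F = 0 := by
    refine LinearMap.ext fun x => ?_
    have h1 : J (F x) = 0 := by
      have := LinearMap.ext_iff.1 hGJ x
      rw [hG0] at this
      simpa [Module.End.mul_apply] using this.symm
    have h2 := hJ2 (F x)
    rw [h1, map_zero] at h2
    have h3 : -F x = 0 := by simpa using h2.symm
    show F x = 0
    simpa using neg_eq_zero.mp h3
  rw [← hFs w, hF0]
  simp
end

section
/- Let h ⊆ gl(n,R) be a Lie subalgebra such that the first prolongation K_h^{(1)} of its tableau vanishes and such that h is elliptic (contains no nonzero element of rank ≤ 1). Then the first prolongation h^{(1)} of h vanishes: every symmetric bilinear map ∇ : R^n × R^n → R^n with ∇_x ∈ h for all x ∈ R^n is zero. -/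
attribute [local instance 100] LieRing.ofAssociativeRing

theorem stmt_6 {n : ℕ}
    (h : LieSubalgebra ℝ (Module.End ℝ (Fin (n+1) → ℝ)))
    (P : Submodule ℝ (Fin (n+1) → ℝ))
    (hP : P = LinearMap.ker (LinearMap.proj (Fin.last n) : (Fin (n+1) → ℝ) →ₗ[ℝ] ℝ))
    (hK1 : ∀ D : P →ₗ[ℝ] P →ₗ[ℝ] (Fin (n+1) → ℝ), (∀ u w : P, D u w = D w u) →
      (∀ u : P, ∃ F ∈ h, ∀ w : P, F (w : Fin (n+1) → ℝ) = D u w) → D = 0)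
    (hell : ∀ F ∈ h, Module.finrank ℝ ↥(LinearMap.range F) ≤ 1 → F = 0) :
    ∀ D : (Fin (n+1) → ℝ) →ₗ[ℝ] Module.End ℝ (Fin (n+1) → ℝ),
      (∀ x y, D x y = D y x) → (∀ x, D x ∈ h) → D = 0 := by
  intro D hsym hmem
  -- finrank of P is n
  have hPrank : Module.finrank ℝ P = n := by
    subst hP
    have hsurj : Function.Surjective
        (LinearMap.proj (Fin.last n) : (Fin (n+1) → ℝ) →ₗ[ℝ] ℝ) := by
      intro c
      exact ⟨fun _ => c, rfl⟩
    have := LinearMap.finrank_range_add_finrank_ker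
      (LinearMap.proj (Fin.last n) : (Fin (n+1) → ℝ) →ₗ[ℝ] ℝ)
    rw [LinearMap.range_eq_top.mpr hsurj, finrank_top] at this
    simp only [Module.finrank_fintype_fun_eq_card, Fintype.card_fin,
      Module.finrank_self] at this
    omega
  -- any element of h killing P is zero
  have key : ∀ F : Module.End ℝ (Fin (n+1) → ℝ), F ∈ h →
      (∀ u : P, F (u : Fin (n+1) → ℝ) = 0) → F = 0 := by
    intro F hF hker
    apply hell F hF
    have hle : P ≤ LinearMap.ker F := by
      intro u hu
      exact hker ⟨u, hu⟩
    have h1 := LinearMap.finrank_range_add_finrank_ker F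
    have h2 : Module.finrank ℝ P ≤ Module.finrank ℝ (LinearMap.ker F) :=
      Submodule.finrank_mono hle
    simp only [Module.finrank_fintype_fun_eq_card, Fintype.card_fin] at h1
    omega
  -- the restriction of D to P × P
  set D' : P →ₗ[ℝ] P →ₗ[ℝ] (Fin (n+1) → ℝ) :=
    ((D.compl₂ P.subtype).comp P.subtype) with hD'
  have hD'app : ∀ u w : P, D' u w = D (u : Fin (n+1) → ℝ) (w : Fin (n+1) → ℝ) :=
    fun u w => rfl
  have hD'0 : D' = 0 := by
    apply hK1
    · intro u w
      rw [hD'app, hD'app, hsym]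
    · intro u
      exact ⟨D (u : Fin (n+1) → ℝ), hmem _, fun w => (hD'app u w).symm⟩
  -- D u = 0 for u ∈ P
  have step1 : ∀ u : P, D (u : Fin (n+1) → ℝ) = 0 := by
    intro u
    apply key _ (hmem _)
    intro w
    have : D' u w = 0 := by rw [hD'0]; rfl
    rw [hD'app] at this
    exact this
  -- the vector e
  set e : Fin (n+1) → ℝ := Pi.single (Fin.last n) 1 with he
  have step2 : D e = 0 := by
    apply key _ (hmem _)
    intro u
    calc (D e) (u : Fin (n+1) → ℝ) = (D (u : Fin (n+1) → ℝ)) e := by rw [hsym]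
    _ = 0 := by rw [step1]; rfl
  -- conclude
  apply LinearMap.ext; intro x
  have hx : x - x (Fin.last n) • e ∈ P := by
    subst hP
    simp [LinearMap.mem_ker, he, Pi.single_apply]
  have hdecomp : x = (x - x (Fin.last n) • e) + x (Fin.last n) • e := by ring_nf
  calc D x = D ((x - x (Fin.last n) • e) + x (Fin.last n) • e) := by rw [← hdecomp]
  _ = D (x - x (Fin.last n) • e) + x (Fin.last n) • D e := by
      rw [map_add, map_smul]
  _ = 0 := by rw [step1 ⟨_, hx⟩, step2]; simp
end

section
/- Let T_0 ∈ End(R^{2m}) be the standard nilpotent endomorphism with T_0(e_i) = e_{m+i} for i ≤ m and T_0(e_{m+i}) = 0 (so T_0^2 = 0 and ker T_0 = im T_0). Then the action of GL(T_0) = {S ∈ GL(2m,R) : S T_0 = T_0 S} on the Grassmannian of (2m-1)-dimensional subspaces of R^{2m} has exactly two orbits, distinguished by dim(U ∩ ker T_0) ∈ {m-1, m}; representatives are U_1 = span(e_1,...,e_{2m-1}) and U_2 = span(e_1,...,e_{m-1},e_{m+1},...,e_{2m}). -/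
/-- The standard nilpotent endomorphism `T₀(x,y) = (0,x)` of `ℝ^m × ℝ^m`. -/
def nilT0 (m : ℕ) : Module.End ℝ ((Fin m → ℝ) × (Fin m → ℝ)) :=
  (LinearMap.inr ℝ (Fin m → ℝ) (Fin m → ℝ)).comp
    (LinearMap.fst ℝ (Fin m → ℝ) (Fin m → ℝ))

/-- Two subspaces are related iff an invertible linear map commuting with `T₀`
maps one to the other. -/
def glT0Rel (m : ℕ) (U U' : Submodule ℝ ((Fin m → ℝ) × (Fin m → ℝ))) : Prop :=
  ∃ S : ((Fin m → ℝ) × (Fin m → ℝ)) ≃ₗ[ℝ] ((Fin m → ℝ) × (Fin m → ℝ)),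
    (∀ x, S (nilT0 m x) = nilT0 m (S x)) ∧ Submodule.map S.toLinearMap U = U'

set_option linter.unusedSectionVars false
set_option maxHeartbeats 1000000
open Module

open Module

variable {E : Type*} [AddCommGroup E] [Module ℝ E] [FiniteDimensional ℝ E]

/-- A hyperplane is the kernel of a nonzero functional. -/
lemma hyperplane_eq_ker (U : Submodule ℝ E) (h : finrank ℝ U + 1 = finrank ℝ E) :
    ∃ φ : E →ₗ[ℝ] ℝ, φ ≠ 0 ∧ U = LinearMap.ker φ := by
  have hQ : finrank ℝ (E ⧸ U) = 1 := by
    have := Submodule.finrank_quotient_add_finrank U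
    omega
  let e : (E ⧸ U) ≃ₗ[ℝ] ℝ := LinearEquiv.ofFinrankEq _ _ (by simp [hQ])
  refine ⟨e.toLinearMap.comp U.mkQ, ?_, ?_⟩
  · intro hz
    have : U = ⊤ := by
      rw [← U.ker_mkQ]
      ext x
      simp only [LinearMap.mem_ker, Submodule.mem_top, iff_true]
      have h0 : (e.toLinearMap.comp U.mkQ) x = 0 := by rw [hz]; rfl
      exact e.injective (by simpa using h0)
    rw [this] at h
    simp [finrank_top] at h
  · rw [LinearMap.ker_comp, LinearEquiv.ker, Submodule.comap_bot, Submodule.ker_mkQ]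

/-- finrank of kernel of a nonzero functional. -/
lemma exists_ne_zero' (f : E →ₗ[ℝ] ℝ) (hf : f ≠ 0) : ∃ u, f u ≠ 0 := by
  by_contra h
  push_neg at h
  exact hf (LinearMap.ext fun x => by simp [h x])

lemma finrank_ker_functional (f : E →ₗ[ℝ] ℝ) (hf : f ≠ 0) :
    finrank ℝ (LinearMap.ker f) + 1 = finrank ℝ E := by
  have hr : LinearMap.range f = ⊤ := by
    rcases exists_ne_zero' f hf with ⟨u, hu⟩
    rw [eq_top_iff]
    intro c _
    exact ⟨(c / f u) • u, by rw [map_smul, smul_eq_mul, div_mul_cancel₀ c hu]⟩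
  have := LinearMap.finrank_range_add_finrank_ker f
  rw [hr, finrank_top, finrank_self] at this
  omega

/-- Splitting equivalence for a functional with a chosen unit vector. -/
noncomputable def funcSplit (f : E →ₗ[ℝ] ℝ) (u : E) (hu : f u = 1) :
    E ≃ₗ[ℝ] (LinearMap.ker f × ℝ) :=
  LinearEquiv.ofLinear
    (LinearMap.prod
      (LinearMap.codRestrict (LinearMap.ker f) (LinearMap.id - f.smulRight u)
        (fun x => by simp [LinearMap.mem_ker, hu, mul_comm]))
      f)
    ((LinearMap.ker f).subtype.comp (LinearMap.fst ℝ _ ℝ) +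
      (LinearMap.smulRight (LinearMap.snd ℝ (LinearMap.ker f) ℝ) u))
    (by
      apply LinearMap.ext
      rintro ⟨⟨w, hw⟩, c⟩
      simp only [LinearMap.mem_ker] at hw
      apply Prod.ext
      · apply Subtype.ext
        simp [LinearMap.codRestrict, hw, hu]
      · simp [hw, hu])
    (by
      apply LinearMap.ext
      intro x
      simp [LinearMap.codRestrict])

lemma funcSplit_symm_apply (f : E →ₗ[ℝ] ℝ) (u : E) (hu : f u = 1)
    (w : LinearMap.ker f) (c : ℝ) :
    (funcSplit f u hu).symm (w, c) = (w : E) + c • u := rfl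

/-- GL acts transitively on nonzero functionals. -/
lemma exists_equiv_comp_eq (f g : E →ₗ[ℝ] ℝ) (hf : f ≠ 0) (hg : g ≠ 0) :
    ∃ A : E ≃ₗ[ℝ] E, ∀ x, f (A x) = g x := by
  obtain ⟨u', hu'⟩ := exists_ne_zero' f hf
  obtain ⟨v', hv'⟩ := exists_ne_zero' g hg
  set u := (f u')⁻¹ • u' with hu_def
  set v := (g v')⁻¹ • v' with hv_def
  have hu : f u = 1 := by simp [hu_def]; field_simp
  have hv : g v = 1 := by simp [hv_def]; field_simp
  have hkk : finrank ℝ (LinearMap.ker g) = finrank ℝ (LinearMap.ker f) := by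
    have := finrank_ker_functional f hf
    have := finrank_ker_functional g hg
    omega
  let ek : (LinearMap.ker g) ≃ₗ[ℝ] (LinearMap.ker f) := LinearEquiv.ofFinrankEq _ _ hkk
  refine ⟨(funcSplit g v hv).trans ((ek.prodCongr (LinearEquiv.refl ℝ ℝ)).trans
    (funcSplit f u hu).symm), fun x => ?_⟩
  simp only [LinearEquiv.trans_apply, LinearEquiv.prodCongr_apply]
  rw [funcSplit_symm_apply]
  have : f ((ek ((funcSplit g v hv) x).1 : LinearMap.ker f) : E) = 0 :=
    (ek _).2
  simp [this, hu, funcSplit]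


section Specific

/-- Equivalence between a product submodule and the product of submodules. -/
noncomputable def prodSubEquiv {M N : Type*} [AddCommGroup M] [AddCommGroup N] [Module ℝ M] [Module ℝ N]
    (p : Submodule ℝ M) (q : Submodule ℝ N) : ↥(p.prod q) ≃ₗ[ℝ] (↥p × ↥q) where
  toFun x := (⟨(x : M × N).1, x.2.1⟩, ⟨(x : M × N).2, x.2.2⟩)
  invFun y := ⟨((y.1 : M), (y.2 : N)), ⟨y.1.2, y.2.2⟩⟩
  map_add' x y := rfl
  map_smul' c x := rfl
  left_inv x := rfl
  right_inv y := rfl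

lemma finrank_prodSub {M N : Type*} [AddCommGroup M] [AddCommGroup N] [Module ℝ M] [Module ℝ N]
    [FiniteDimensional ℝ M] [FiniteDimensional ℝ N]
    (p : Submodule ℝ M) (q : Submodule ℝ N) :
    finrank ℝ (p.prod q) = finrank ℝ p + finrank ℝ q := by
  rw [(prodSubEquiv p q).finrank_eq, Module.finrank_prod]

variable {n : ℕ}

local notation "E" => (Fin n → ℝ)
local notation "V" => ((Fin n → ℝ) × (Fin n → ℝ))

lemma ker_nilT0 : LinearMap.ker (nilT0 n) = Submodule.prod ⊥ (⊤ : Submodule ℝ E) := by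
  ext ⟨x, y⟩
  simp [nilT0, Prod.ext_iff]

lemma finrank_ker_nilT0 : finrank ℝ (LinearMap.ker (nilT0 n)) = n := by
  rw [ker_nilT0, finrank_prodSub]
  simp [finrank_top, Module.finrank_fin_fun]

lemma rel_refl (U : Submodule ℝ V) : glT0Rel n U U :=
  ⟨LinearEquiv.refl ℝ _, fun _ => rfl, Submodule.map_id U⟩

lemma rel_symm {U U' : Submodule ℝ V} (h : glT0Rel n U U') : glT0Rel n U' U := by
  obtain ⟨S, hS, hmap⟩ := h
  refine ⟨S.symm, fun x => ?_, ?_⟩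
  · calc S.symm (nilT0 n x) = S.symm (nilT0 n (S (S.symm x))) := by rw [S.apply_symm_apply]
      _ = S.symm (S (nilT0 n (S.symm x))) := by rw [hS]
      _ = nilT0 n (S.symm x) := S.symm_apply_apply _
  · rw [← hmap, ← Submodule.map_comp]
    have h0 : (S.symm.toLinearMap.comp S.toLinearMap) = LinearMap.id :=
      LinearMap.ext fun x => S.symm_apply_apply x
    rw [h0, Submodule.map_id]

lemma rel_trans {U U' U'' : Submodule ℝ V} (h : glT0Rel n U U') (h' : glT0Rel n U' U'') :
    glT0Rel n U U'' := by
  obtain ⟨S, hS, hmap⟩ := h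
  obtain ⟨S', hS', hmap'⟩ := h'
  refine ⟨S.trans S', fun x => ?_, ?_⟩
  · simp only [LinearEquiv.trans_apply, hS, hS']
  · rw [← hmap', ← hmap, ← Submodule.map_comp]
    rfl

end Specific

section Specific2

variable {n : ℕ}

local notation "E" => (Fin n → ℝ)
local notation "V" => ((Fin n → ℝ) × (Fin n → ℝ))

/-- Shear equivalence `(x,y) ↦ (x, Cx + y)`. -/
noncomputable def shearEquiv (C : (Fin n → ℝ) →ₗ[ℝ] (Fin n → ℝ)) : V ≃ₗ[ℝ] V :=
  LinearEquiv.ofLinear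
    (LinearMap.prod (LinearMap.fst ℝ E E)
      (C.comp (LinearMap.fst ℝ E E) + LinearMap.snd ℝ E E))
    (LinearMap.prod (LinearMap.fst ℝ E E)
      (- (C.comp (LinearMap.fst ℝ E E)) + LinearMap.snd ℝ E E))
    (by apply LinearMap.ext; rintro ⟨x, y⟩; simp)
    (by apply LinearMap.ext; rintro ⟨x, y⟩; simp)

lemma shearEquiv_apply (C : (Fin n → ℝ) →ₗ[ℝ] (Fin n → ℝ)) (x y : E) :
    shearEquiv C (x, y) = (x, C x + y) := rfl

lemma shearEquiv_comm (C : (Fin n → ℝ) →ₗ[ℝ] (Fin n → ℝ)) (v : V) :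
    shearEquiv C (nilT0 n v) = nilT0 n (shearEquiv C v) := by
  obtain ⟨x, y⟩ := v
  simp [shearEquiv_apply, nilT0]

/-- The equivalence `(x,y) ↦ (Ax, Ay)`. -/
noncomputable def diagEquiv (A : (Fin n → ℝ) ≃ₗ[ℝ] (Fin n → ℝ)) : V ≃ₗ[ℝ] V := A.prodCongr A

lemma diagEquiv_comm (A : (Fin n → ℝ) ≃ₗ[ℝ] (Fin n → ℝ)) (v : V) :
    diagEquiv A (nilT0 n v) = nilT0 n (diagEquiv A v) := by
  obtain ⟨x, y⟩ := v
  simp [diagEquiv, nilT0]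

lemma map_diagEquiv (A : (Fin n → ℝ) ≃ₗ[ℝ] (Fin n → ℝ)) (p q : Submodule ℝ E) :
    Submodule.map (diagEquiv A).toLinearMap (p.prod q) =
      (p.map A.toLinearMap).prod (q.map A.toLinearMap) := by
  ext ⟨x, y⟩
  simp only [Submodule.mem_map, Submodule.mem_prod, Prod.exists]
  constructor
  · rintro ⟨a, b, ⟨ha, hb⟩, hab⟩
    have h1 : A a = x ∧ A b = y := Prod.mk.injEq .. ▸ (by simpa [diagEquiv] using hab)
    exact ⟨⟨a, ha, h1.1⟩, ⟨b, hb, h1.2⟩⟩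
  · rintro ⟨⟨a, ha, rfl⟩, ⟨b, hb, rfl⟩⟩
    exact ⟨a, b, ⟨ha, hb⟩, rfl⟩

/-- Invariance of `finrank (U ⊓ ker T₀)` under the relation. -/
lemma rel_finrank_inf_ker {U U' : Submodule ℝ V} (h : glT0Rel n U U') :
    finrank ℝ (U ⊓ LinearMap.ker (nilT0 n) : Submodule ℝ V) =
      finrank ℝ (U' ⊓ LinearMap.ker (nilT0 n) : Submodule ℝ V) := by
  obtain ⟨S, hS, hmap⟩ := h
  have hker : Submodule.map S.toLinearMap (LinearMap.ker (nilT0 n)) = LinearMap.ker (nilT0 n) := by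
    apply le_antisymm
    · rintro x ⟨a, ha, rfl⟩
      simp only [LinearMap.mem_ker] at ha ⊢
      rw [LinearEquiv.coe_coe, ← hS, ha, map_zero]
    · intro x hx
      refine ⟨S.symm x, ?_, S.apply_symm_apply x⟩
      simp only [LinearMap.mem_ker] at hx ⊢
      apply S.injective
      rw [hS, S.apply_symm_apply, hx, map_zero]
  have : Submodule.map S.toLinearMap (U ⊓ LinearMap.ker (nilT0 n)) =
      U' ⊓ LinearMap.ker (nilT0 n) := by
    rw [Submodule.map_inf S.toLinearMap S.injective, hmap, hker]
  rw [← this, LinearEquiv.finrank_map_eq]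

end Specific2

section Classify

variable {m' : ℕ}

local notation "E" => (Fin (m'+1) → ℝ)
local notation "V" => ((Fin (m'+1) → ℝ) × (Fin (m'+1) → ℝ))

noncomputable abbrev g0 (m' : ℕ) : (Fin (m'+1) → ℝ) →ₗ[ℝ] ℝ := LinearMap.proj (Fin.last m')

lemma g0_apply_single : g0 m' (Pi.single (Fin.last m') 1) = 1 := by
  simp [g0]

lemma g0_ne : (g0 m') ≠ 0 := by
  intro h
  have := g0_apply_single (m' := m')
  rw [h] at this
  simp at this

lemma finrank_ker_g0 : finrank ℝ (LinearMap.ker (g0 m')) = m' := by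
  have := finrank_ker_functional (g0 m') g0_ne
  rw [Module.finrank_fin_fun] at this
  omega

/-- Case `ker T₀ ⊆ U`: `U` is related to `U₂ = (ker g₀) × ⊤`. -/
lemma classify_sub {U : Submodule ℝ V} (hU : finrank ℝ U = 2*m'+1)
    (hK : LinearMap.ker (nilT0 (m'+1)) ≤ U) :
    glT0Rel (m'+1) U ((LinearMap.ker (g0 m')).prod ⊤) := by
  set W : Submodule ℝ E := U.map (LinearMap.fst ℝ E E) with hWdef
  have hW : U = W.prod ⊤ := by
    ext ⟨x, y⟩
    simp only [Submodule.mem_prod, Submodule.mem_top, and_true]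
    constructor
    · intro h
      exact ⟨(x, y), h, rfl⟩
    · rintro ⟨⟨a, b⟩, hab, (h1 : a = x)⟩
      subst h1
      have hk : ((0 : E), y - b) ∈ LinearMap.ker (nilT0 (m'+1)) := by
        rw [ker_nilT0]
        exact ⟨Submodule.zero_mem _, Submodule.mem_top⟩
      have := U.add_mem hab (hK hk)
      simpa using this
  have hWfin : finrank ℝ W + 1 = finrank ℝ E := by
    have h2 := finrank_prodSub W (⊤ : Submodule ℝ E)
    rw [← hW, hU, finrank_top, Module.finrank_fin_fun] at h2
    rw [Module.finrank_fin_fun]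
    omega
  obtain ⟨f, hf0, hWf⟩ := hyperplane_eq_ker W hWfin
  obtain ⟨A, hA⟩ := exists_equiv_comp_eq (g0 m') f g0_ne hf0
  have hmapker : Submodule.map A.toLinearMap (LinearMap.ker f) = LinearMap.ker (g0 m') := by
    have h1 : LinearMap.ker f = Submodule.comap A.toLinearMap (LinearMap.ker (g0 m')) := by
      ext x
      simp [← hA x]
    rw [h1, Submodule.map_comap_eq, LinearEquiv.range, top_inf_eq]
  refine ⟨diagEquiv A, diagEquiv_comm A, ?_⟩
  rw [hW, hWf, map_diagEquiv, hmapker, Submodule.map_top, LinearEquiv.range]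

/-- Case `dim (U ⊓ ker T₀) = m'`: `U` is related to `U₁ = ⊤ × (ker g₀)`. -/
lemma classify_inf {U : Submodule ℝ V} (hU : finrank ℝ U = 2*m'+1)
    (hd : finrank ℝ (U ⊓ LinearMap.ker (nilT0 (m'+1)) : Submodule ℝ V) = m') :
    glT0Rel (m'+1) U (Submodule.prod ⊤ (LinearMap.ker (g0 m'))) := by
  have hUfin : finrank ℝ U + 1 = finrank ℝ V := by
    rw [hU, Module.finrank_prod, Module.finrank_fin_fun]
    ring
  obtain ⟨φ, hφ0, hUφ⟩ := hyperplane_eq_ker U hUfin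
  set f : E →ₗ[ℝ] ℝ := φ.comp (LinearMap.inl ℝ E E) with hf
  set g : E →ₗ[ℝ] ℝ := φ.comp (LinearMap.inr ℝ E E) with hg
  have hgne : g ≠ 0 := by
    intro hg0
    have hKU : LinearMap.ker (nilT0 (m'+1)) ≤ U := by
      intro v hv
      rw [ker_nilT0] at hv
      obtain ⟨x, y⟩ := v
      obtain ⟨hx, -⟩ := hv
      simp only [Submodule.mem_bot] at hx
      subst hx
      rw [hUφ, LinearMap.mem_ker]
      have : φ (0, y) = g y := by simp [hg]
      rw [this, hg0]
      rfl
    have : U ⊓ LinearMap.ker (nilT0 (m'+1)) = LinearMap.ker (nilT0 (m'+1)) :=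
      le_antisymm inf_le_right (le_inf hKU le_rfl)
    rw [this, finrank_ker_nilT0] at hd
    omega
  obtain ⟨A, hA⟩ := exists_equiv_comp_eq (g0 m') g g0_ne hgne
  set B : E →ₗ[ℝ] E := f.smulRight (Pi.single (Fin.last m') 1) with hB
  set S : V ≃ₗ[ℝ] V := (shearEquiv (A.symm.toLinearMap.comp B)).trans (diagEquiv A) with hS
  have hScomm : ∀ v, S (nilT0 (m'+1) v) = nilT0 (m'+1) (S v) := by
    intro v
    simp only [hS, LinearEquiv.trans_apply]
    rw [shearEquiv_comm, diagEquiv_comm]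
  set φ0 : V →ₗ[ℝ] ℝ := (g0 m').comp (LinearMap.snd ℝ E E) with hφ0def
  have hU1ker : Submodule.prod (⊤ : Submodule ℝ E) (LinearMap.ker (g0 m')) = LinearMap.ker φ0 := by
    ext ⟨x, y⟩
    simp [hφ0def]
  have hSapp : ∀ x y : E, S (x, y) = (A x, B x + A y) := by
    intro x y
    simp only [hS, LinearEquiv.trans_apply, shearEquiv_apply]
    show (A x, A (A.symm (B x) + y)) = _
    rw [map_add, A.apply_symm_apply]
  have hcomp : ∀ v : V, φ0 (S v) = φ v := by
    rintro ⟨x, y⟩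
    rw [hSapp]
    have h1 : φ0 (A x, B x + A y) = g0 m' (B x) + g0 m' (A y) := by
      simp [hφ0def]
    have h2 : g0 m' (B x) = f x := by
      simp [hB, g0_apply_single]
    have h3 : φ (x, y) = f x + g y := by
      have : (x, y) = ((x, 0) : V) + (0, y) := by simp
      rw [this, map_add]
      rfl
    rw [h1, h2, hA, h3]
  refine ⟨S, hScomm, ?_⟩
  have hUc : U = Submodule.comap S.toLinearMap (LinearMap.ker φ0) := by
    rw [hUφ]
    ext v
    simp only [Submodule.mem_comap, LinearMap.mem_ker, LinearEquiv.coe_coe]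
    rw [hcomp]
  rw [hUc, Submodule.map_comap_eq, LinearEquiv.range, top_inf_eq, hU1ker]

/-- Dichotomy for the dimension of the intersection. -/
lemma dim_dichotomy (U : Submodule ℝ V) (hU : finrank ℝ U = 2*m'+1) :
    finrank ℝ (U ⊓ LinearMap.ker (nilT0 (m'+1)) : Submodule ℝ V) = m' ∨
    finrank ℝ (U ⊓ LinearMap.ker (nilT0 (m'+1)) : Submodule ℝ V) = m' + 1 := by
  set K := LinearMap.ker (nilT0 (m'+1)) with hK
  have h1 := Submodule.finrank_sup_add_finrank_inf_eq U K
  have h2 : finrank ℝ (U ⊔ K : Submodule ℝ V) ≤ finrank ℝ V := Submodule.finrank_le _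
  have h3 : finrank ℝ U ≤ finrank ℝ (U ⊔ K : Submodule ℝ V) :=
    Submodule.finrank_mono le_sup_left
  have h4 : finrank ℝ (U ⊓ K : Submodule ℝ V) ≤ finrank ℝ K :=
    Submodule.finrank_mono inf_le_right
  have h5 : finrank ℝ K = m' + 1 := finrank_ker_nilT0
  have h6 : finrank ℝ V = 2*(m'+1) := by
    rw [Module.finrank_prod, Module.finrank_fin_fun]
    ring
  omega

end Classify

section Main

variable {m' : ℕ}

local notation "E" => (Fin (m'+1) → ℝ)
local notation "V" => ((Fin (m'+1) → ℝ) × (Fin (m'+1) → ℝ))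

lemma classify_sub' {U : Submodule ℝ V} (hU : finrank ℝ U = 2*m'+1)
    (hd : finrank ℝ (U ⊓ LinearMap.ker (nilT0 (m'+1)) : Submodule ℝ V) = m' + 1) :
    glT0Rel (m'+1) U ((LinearMap.ker (g0 m')).prod ⊤) := by
  apply classify_sub hU
  have heq : U ⊓ LinearMap.ker (nilT0 (m'+1)) = LinearMap.ker (nilT0 (m'+1)) := by
    apply Submodule.eq_of_le_of_finrank_le inf_le_right
    rw [hd, finrank_ker_nilT0]
  rw [← heq]
  exact inf_le_left

theorem stmt_8' (U1 U2 : Submodule ℝ V)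
    (hU1 : U1 = Submodule.prod ⊤
      (LinearMap.ker (LinearMap.proj (Fin.last m') : (Fin (m'+1) → ℝ) →ₗ[ℝ] ℝ)))
    (hU2 : U2 = Submodule.prod
      (LinearMap.ker (LinearMap.proj (Fin.last m') : (Fin (m'+1) → ℝ) →ₗ[ℝ] ℝ)) ⊤) :
    (∀ U U' : Submodule ℝ V,
      finrank ℝ U = 2*m' + 1 → finrank ℝ U' = 2*m' + 1 →
      (glT0Rel (m'+1) U U' ↔
        finrank ℝ (U ⊓ LinearMap.ker (nilT0 (m'+1)) : Submodule ℝ V) =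
          finrank ℝ (U' ⊓ LinearMap.ker (nilT0 (m'+1)) : Submodule ℝ V))) ∧
    (∀ U : Submodule ℝ V,
      finrank ℝ U = 2*m' + 1 →
      (finrank ℝ (U ⊓ LinearMap.ker (nilT0 (m'+1)) : Submodule ℝ V) = m' ∨
        finrank ℝ (U ⊓ LinearMap.ker (nilT0 (m'+1)) : Submodule ℝ V) = m' + 1) ∧
      (glT0Rel (m'+1) U U1 ∨ glT0Rel (m'+1) U U2)) ∧
    finrank ℝ (U1 ⊓ LinearMap.ker (nilT0 (m'+1)) : Submodule ℝ V) = m' ∧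
    finrank ℝ (U2 ⊓ LinearMap.ker (nilT0 (m'+1)) : Submodule ℝ V) = m' + 1 ∧
    ¬ glT0Rel (m'+1) U1 U2 := by
  have hg0 : (LinearMap.proj (Fin.last m') : (Fin (m'+1) → ℝ) →ₗ[ℝ] ℝ) = g0 m' := rfl
  rw [hg0] at hU1 hU2
  subst hU1 hU2
  have hU1K : (Submodule.prod (⊤ : Submodule ℝ E) (LinearMap.ker (g0 m'))) ⊓
      LinearMap.ker (nilT0 (m'+1)) = Submodule.prod ⊥ (LinearMap.ker (g0 m')) := by
    rw [ker_nilT0, Submodule.prod_inf_prod, top_inf_eq, inf_top_eq]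
  have hU2K : (Submodule.prod (LinearMap.ker (g0 m')) (⊤ : Submodule ℝ E)) ⊓
      LinearMap.ker (nilT0 (m'+1)) = Submodule.prod ⊥ (⊤ : Submodule ℝ E) := by
    rw [ker_nilT0, Submodule.prod_inf_prod, inf_top_eq]
    congr 1
    exact inf_eq_right.mpr bot_le
  have h1K : finrank ℝ ((Submodule.prod (⊤ : Submodule ℝ E) (LinearMap.ker (g0 m'))) ⊓
      LinearMap.ker (nilT0 (m'+1)) : Submodule ℝ V) = m' := by
    rw [hU1K, finrank_prodSub, finrank_bot, finrank_ker_g0]; omega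
  have h2K : finrank ℝ ((Submodule.prod (LinearMap.ker (g0 m')) (⊤ : Submodule ℝ E)) ⊓
      LinearMap.ker (nilT0 (m'+1)) : Submodule ℝ V) = m' + 1 := by
    rw [hU2K, finrank_prodSub, finrank_bot, finrank_top, Module.finrank_fin_fun]; omega
  refine ⟨?_, ?_, h1K, h2K, ?_⟩
  · intro U U' hU hU'
    constructor
    · exact rel_finrank_inf_ker
    · intro hd
      rcases dim_dichotomy U hU with h | h
      · exact rel_trans (classify_inf hU h) (rel_symm (classify_inf hU' (by omega)))
      · exact rel_trans (classify_sub' hU h) (rel_symm (classify_sub' hU' (by omega)))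
  · intro U hU
    refine ⟨dim_dichotomy U hU, ?_⟩
    rcases dim_dichotomy U hU with h | h
    · exact Or.inl (classify_inf hU h)
    · exact Or.inr (classify_sub' hU h)
  · intro h
    have := rel_finrank_inf_ker h
    rw [h1K, h2K] at this
    omega

end Main

theorem stmt_8 (m' : ℕ)
    (U1 U2 : Submodule ℝ ((Fin (m'+1) → ℝ) × (Fin (m'+1) → ℝ)))
    (hU1 : U1 = Submodule.prod ⊤
      (LinearMap.ker (LinearMap.proj (Fin.last m') : (Fin (m'+1) → ℝ) →ₗ[ℝ] ℝ)))
    (hU2 : U2 = Submodule.prod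
      (LinearMap.ker (LinearMap.proj (Fin.last m') : (Fin (m'+1) → ℝ) →ₗ[ℝ] ℝ)) ⊤) :
    (∀ U U' : Submodule ℝ ((Fin (m'+1) → ℝ) × (Fin (m'+1) → ℝ)),
      Module.finrank ℝ ↥U = 2*m' + 1 → Module.finrank ℝ ↥U' = 2*m' + 1 →
      (glT0Rel (m'+1) U U' ↔
        Module.finrank ℝ ↥(U ⊓ LinearMap.ker (nilT0 (m'+1))) =
          Module.finrank ℝ ↥(U' ⊓ LinearMap.ker (nilT0 (m'+1))))) ∧
    (∀ U : Submodule ℝ ((Fin (m'+1) → ℝ) × (Fin (m'+1) → ℝ)),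
      Module.finrank ℝ ↥U = 2*m' + 1 →
      (Module.finrank ℝ ↥(U ⊓ LinearMap.ker (nilT0 (m'+1))) = m' ∨
        Module.finrank ℝ ↥(U ⊓ LinearMap.ker (nilT0 (m'+1))) = m' + 1) ∧
      (glT0Rel (m'+1) U U1 ∨ glT0Rel (m'+1) U U2)) ∧
    Module.finrank ℝ ↥(U1 ⊓ LinearMap.ker (nilT0 (m'+1))) = m' ∧
    Module.finrank ℝ ↥(U2 ⊓ LinearMap.ker (nilT0 (m'+1))) = m' + 1 ∧
    ¬ glT0Rel (m'+1) U1 U2 := by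
  exact stmt_8' U1 U2 hU1 hU2
end

section
/- Every even-dimensional almost Abelian Lie algebra admits a paracomplex structure. More precisely: for every f ∈ End(R^{2m-1}), the almost Abelian Lie algebra g_f = R^{2m-1} ⋊_f R admits an endomorphism E with E^2 = id, whose ±1-eigenspaces both have dimension m, whose Nijenhuis tensor vanishes, and which leaves the codimension-one Abelian ideal R^{2m-1} invariant. -/
/-- The Lie bracket of the almost Abelian Lie algebra `g_f = ℝ^k ⋊_f ℝ`. -/
def aaBr {k : ℕ} (f : Module.End ℝ (Fin k → ℝ)) :
    ((Fin k → ℝ) × ℝ) → ((Fin k → ℝ) × ℝ) → ((Fin k → ℝ) × ℝ) :=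
  fun x y => (x.2 • f y.1 - y.2 • f x.1, 0)

open Module Polynomial


lemma span_pair_finrank {V : Type*} [AddCommGroup V] [Module ℝ V]
    {x y : V} (h : LinearIndependent ℝ ![x, y]) :
    finrank ℝ ↥(Submodule.span ℝ {x, y}) = 2 := by
  have hr : ({x, y} : Set V) = Set.range ![x, y] := by
    ext z; simp [Fin.exists_fin_two, or_comm]
  rw [hr, finrank_span_eq_card h]
  simp


lemma exists_indep_pair_of_two_le_finrank {V : Type*} [AddCommGroup V] [Module ℝ V]
    [FiniteDimensional ℝ V] (K : Submodule ℝ V) (h2 : 2 ≤ finrank ℝ ↥K) :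
    ∃ x y : V, x ∈ K ∧ y ∈ K ∧ LinearIndependent ℝ ![x, y] := by
  let b := Module.finBasis ℝ ↥K
  refine ⟨(b (Fin.castLE h2 0) : V), (b (Fin.castLE h2 1) : V),
    SetLike.coe_mem _, SetLike.coe_mem _, ?_⟩
  have h1 := (b.linearIndependent.comp (Fin.castLE h2)
    (Fin.castLE_injective h2)).map' K.subtype (Submodule.ker_subtype K)
  have he : ![((b (Fin.castLE h2 0) : V)), ((b (Fin.castLE h2 1) : V))]
      = K.subtype ∘ b ∘ Fin.castLE h2 := by
    funext i; fin_cases i <;> rfl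
  rw [he]; exact h1


lemma exists_ker_factor {V : Type*} [AddCommGroup V] [Module ℝ V] [FiniteDimensional ℝ V]
    [Nontrivial V] (f : Module.End ℝ V) :
    ∃ p : ℝ[X], Irreducible p ∧ ∃ v : V, v ≠ 0 ∧ Polynomial.aeval f p v = 0 := by
  have hint : IsIntegral ℝ f := LinearMap.isIntegral f
  obtain ⟨p, hpirr, q, hq⟩ := WfDvdMonoid.exists_irreducible_factor
    (minpoly.not_isUnit ℝ f) (minpoly.ne_zero hint)
  refine ⟨p, hpirr, ?_⟩
  have hmin0 : minpoly ℝ f ≠ 0 := minpoly.ne_zero hint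
  have hq0 : q ≠ 0 := by rintro rfl; rw [mul_zero] at hq; exact hmin0 hq
  have hp0 : p ≠ 0 := hpirr.ne_zero
  by_contra hcon
  push_neg at hcon
  have hqzero : Polynomial.aeval f q = 0 := by
    ext x
    simp only [LinearMap.zero_apply]
    by_contra hx
    refine hcon _ hx ?_
    have h0 : Polynomial.aeval f (minpoly ℝ f) = 0 := minpoly.aeval ℝ f
    have : Polynomial.aeval f p * Polynomial.aeval f q = 0 := by
      rw [← map_mul, ← hq, h0]
    calc Polynomial.aeval f p (Polynomial.aeval f q x)
        = (Polynomial.aeval f p * Polynomial.aeval f q) x := rfl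
      _ = 0 := by rw [this]; rfl
  have hdvd : minpoly ℝ f ∣ q := minpoly.dvd ℝ f hqzero
  have h1 : (minpoly ℝ f).natDegree ≤ q.natDegree := Polynomial.natDegree_le_of_dvd hdvd hq0
  have h2 : (minpoly ℝ f).natDegree = p.natDegree + q.natDegree := by
    rw [hq, Polynomial.natDegree_mul hp0 hq0]
  have h3 : 0 < p.natDegree := hpirr.natDegree_pos
  omega

lemma exists_invariant_two :
    ∀ (n : ℕ) (V : Type) (_ : AddCommGroup V) (_ : Module ℝ V) (_ : FiniteDimensional ℝ V)
      (f : Module.End ℝ V), finrank ℝ V = n → 2 ≤ n →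
      ∃ W : Submodule ℝ V, (∀ x ∈ W, f x ∈ W) ∧ finrank ℝ ↥W = 2 := by
  intro n
  induction n using Nat.strong_induction_on with
  | _ n IH =>
    intro V _ _ _ f hn h2
    by_cases hn2 : n = 2
    · exact ⟨⊤, fun x _ => Submodule.mem_top, by rw [finrank_top, hn, hn2]⟩
    have hn3 : 3 ≤ n := by omega
    have hnt : Nontrivial V := by
      apply nontrivial_of_finrank_pos (R := ℝ); omega
    obtain ⟨p, hpirr, v, hv0, hvp⟩ := exists_ker_factor f
    have hdeg : p.natDegree ≤ 2 := hpirr.natDegree_le_two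
    have hrel : p.coeff 0 • v + p.coeff 1 • f v + p.coeff 2 • f (f v) = 0 := by
      have := Polynomial.aeval_eq_sum_range' (show p.natDegree < 3 by omega) f
      rw [this] at hvp
      simpa [Finset.sum_range_succ, pow_succ, Module.End.mul_apply, add_assoc] using hvp
    by_cases hc2 : p.coeff 2 = 0
    · by_cases hc1 : p.coeff 1 = 0
      · -- p is a constant: contradiction with irreducibility
        exfalso
        have hd0 : p.natDegree = 0 := by
          by_contra hd
          have hlead : p.coeff p.natDegree ≠ 0 := by
            have := Polynomial.leadingCoeff_ne_zero.mpr hpirr.ne_zero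
            rwa [Polynomial.leadingCoeff] at this
          have hcase : p.natDegree = 1 ∨ p.natDegree = 2 := by omega
          rcases hcase with h | h <;> rw [h] at hlead
          · exact hlead hc1
          · exact hlead hc2
        rw [Polynomial.eq_C_of_natDegree_eq_zero hd0] at hpirr
        exact Polynomial.not_irreducible_C _ hpirr
      · -- eigenvector case
        have hv' : f v = (-(p.coeff 0) / p.coeff 1) • v := by
          rw [hc2, zero_smul, add_zero] at hrel
          have hstep : p.coeff 1 • f v = -(p.coeff 0) • v := by
            linear_combination (norm := module) hrel
          rw [div_eq_inv_mul, mul_smul, ← hstep, inv_smul_smul₀ hc1]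
        obtain ⟨lam, hv⟩ : ∃ lam : ℝ, f v = lam • v := ⟨_, hv'⟩
        have hmemK : ∀ x, x ∈ LinearMap.ker (f - lam • (1 : Module.End ℝ V)) ↔
            f x = lam • x := by
          intro x
          simp [LinearMap.mem_ker, sub_eq_zero]
        by_cases hKr : 2 ≤ finrank ℝ ↥(LinearMap.ker (f - lam • (1 : Module.End ℝ V)))
        · -- pick a 2-dim subspace of the eigenspace
          obtain ⟨x0, y0, hx0, hy0, hindp⟩ :=
            exists_indep_pair_of_two_le_finrank _ hKr
          refine ⟨Submodule.span ℝ {x0, y0}, ?_, span_pair_finrank hindp⟩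
          intro x hx
          have hsub : Submodule.span ℝ {x0, y0} ≤
              LinearMap.ker (f - lam • (1 : Module.End ℝ V)) := by
            rw [Submodule.span_le]
            rintro z (rfl | rfl)
            · exact hx0
            · exact hy0
          have : f x = lam • x := (hmemK x).mp (hsub hx)
          rw [this]
          exact Submodule.smul_mem _ _ hx
        · -- eigenspace is a line; recurse on the range of f - lam
          have hvK : v ∈ LinearMap.ker (f - lam • (1 : Module.End ℝ V)) := (hmemK v).mpr hv
          have hK1 : finrank ℝ ↥(LinearMap.ker (f - lam • (1 : Module.End ℝ V))) = 1 := by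
            have hKnt : Nontrivial ↥(LinearMap.ker (f - lam • (1 : Module.End ℝ V))) :=
              ⟨⟨⟨v, hvK⟩, 0, by simp [Subtype.ext_iff, hv0]⟩⟩
            have h0 : 0 < finrank ℝ ↥(LinearMap.ker (f - lam • (1 : Module.End ℝ V))) :=
              Module.finrank_pos_iff.mpr hKnt
            omega
          have hcomm : ∀ x, (f - lam • (1 : Module.End ℝ V)) (f x)
              = f ((f - lam • (1 : Module.End ℝ V)) x) := by
            intro x
            simp [LinearMap.sub_apply, LinearMap.smul_apply, map_sub, map_smul]
          have hRinv : ∀ x ∈ LinearMap.range (f - lam • (1 : Module.End ℝ V)), f x ∈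
              LinearMap.range (f - lam • (1 : Module.End ℝ V)) := by
            rintro _ ⟨y, rfl⟩
            exact ⟨f y, hcomm y⟩
          have hRrank : finrank ℝ ↥(LinearMap.range (f - lam • (1 : Module.End ℝ V))) = n - 1 := by
            have h := LinearMap.finrank_range_add_finrank_ker (f - lam • (1 : Module.End ℝ V))
            rw [hn, hK1] at h
            omega
          have hlt : n - 1 < n := by omega
          have hge : 2 ≤ n - 1 := by omega
          obtain ⟨W', hW'inv, hW'rank⟩ :=
            IH (n - 1) hlt ↥(LinearMap.range (f - lam • (1 : Module.End ℝ V)))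
              inferInstance inferInstance inferInstance
              (f.restrict hRinv) hRrank hge
          refine ⟨W'.map (LinearMap.range (f - lam • (1 : Module.End ℝ V))).subtype, ?_, ?_⟩
          · rintro _ ⟨y, hy, rfl⟩
            exact ⟨f.restrict hRinv y, hW'inv y hy, rfl⟩
          · rw [Submodule.finrank_map_subtype_eq]; exact hW'rank
    · -- degree-2 case: span {v, f v}
      have hindep : LinearIndependent ℝ ![v, f v] := by
        rw [LinearIndependent.pair_iff' hv0]
        intro a ha
        have hroot : p.IsRoot a := by
          have : (p.coeff 0 + p.coeff 1 * a + p.coeff 2 * (a * a)) • v = 0 := by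
            have hffv : f (f v) = (a * a) • v := by
              rw [← ha, map_smul, ← ha, smul_smul]
            rw [hffv, ← ha] at hrel
            simpa [smul_smul, add_smul, mul_comm, mul_assoc, add_assoc] using hrel
          have hz : p.coeff 0 + p.coeff 1 * a + p.coeff 2 * (a * a) = 0 := by
            rcases smul_eq_zero.mp this with h | h
            · exact h
            · exact absurd h hv0
          have := Polynomial.eval_eq_sum_range' (show p.natDegree < 3 by omega) a
          rw [Polynomial.IsRoot, this]
          simpa [Finset.sum_range_succ, pow_succ, mul_comm, mul_assoc] using hz
        obtain ⟨r, hr⟩ := Polynomial.dvd_iff_isRoot.mpr hroot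
        rcases hpirr.isUnit_or_isUnit hr with h | h
        · exact Polynomial.not_isUnit_X_sub_C a h
        · have hr0 : r ≠ 0 := by
            rintro rfl; rw [mul_zero] at hr; exact hpirr.ne_zero hr
          have h1 : p.natDegree = 1 := by
            rw [hr, Polynomial.natDegree_mul (Polynomial.X_sub_C_ne_zero a) hr0,
              Polynomial.natDegree_X_sub_C, Polynomial.natDegree_eq_zero_of_isUnit h]
          have h2 : 2 ≤ p.natDegree := Polynomial.le_natDegree_of_ne_zero hc2
          omega
      have hffv : f (f v) = (-(p.coeff 0) / p.coeff 2) • v + (-(p.coeff 1) / p.coeff 2) • f v := by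
        have : p.coeff 2 • f (f v) = -(p.coeff 0) • v + -(p.coeff 1) • f v := by
          linear_combination (norm := module) hrel
        calc f (f v) = (p.coeff 2)⁻¹ • (p.coeff 2 • f (f v)) := (inv_smul_smul₀ hc2 _).symm
          _ = _ := by rw [this]; rw [div_eq_inv_mul, div_eq_inv_mul, smul_add, mul_smul, mul_smul]
      refine ⟨Submodule.span ℝ {v, f v}, ?_, span_pair_finrank hindep⟩
      intro x hx
      induction hx using Submodule.span_induction with
      | mem z hz =>
        rcases hz with rfl | rfl
        · exact Submodule.subset_span (by simp)
        · rw [hffv]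
          exact Submodule.add_mem _
            (Submodule.smul_mem _ _ (Submodule.subset_span (by simp)))
            (Submodule.smul_mem _ _ (Submodule.subset_span (by simp)))
      | zero => simp
      | add a b _ _ ha hb => rw [map_add]; exact Submodule.add_mem _ ha hb
      | smul c a _ ha => rw [map_smul]; exact Submodule.smul_mem _ _ ha


lemma finrank_comap_mkQ {V : Type*} [AddCommGroup V] [Module ℝ V] [FiniteDimensional ℝ V]
    (U : Submodule ℝ V) (Wb : Submodule ℝ (V ⧸ U)) :
    finrank ℝ ↥(Wb.comap U.mkQ) = finrank ℝ ↥Wb + finrank ℝ ↥U := by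
  set W := Wb.comap U.mkQ with hW
  have hUW : U ≤ W := by
    intro x hx
    simp [hW, Submodule.mem_comap, (Submodule.Quotient.mk_eq_zero U).mpr hx]
  have h1 := LinearMap.finrank_range_add_finrank_ker (U.mkQ.domRestrict W)
  have hrange : LinearMap.range (U.mkQ.domRestrict W) = Wb := by
    rw [LinearMap.range_domRestrict]
    rw [hW, Submodule.map_comap_eq, Submodule.range_mkQ, top_inf_eq]
  have hker : LinearMap.ker (U.mkQ.domRestrict W) = U.comap W.subtype := by
    ext x
    simp [LinearMap.mem_ker, Submodule.mem_comap, LinearMap.domRestrict_apply,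
      Submodule.Quotient.mk_eq_zero]
  have hkerrank : finrank ℝ ↥(U.comap W.subtype) = finrank ℝ ↥U :=
    (Submodule.comapSubtypeEquivOfLe hUW).finrank_eq
  rw [hrange, hker, hkerrank] at h1
  rw [← h1]

lemma exists_invariant_even :
    ∀ (d : ℕ) (V : Type) (_ : AddCommGroup V) (_ : Module ℝ V) (_ : FiniteDimensional ℝ V)
      (f : Module.End ℝ V), 2 * d ≤ finrank ℝ V →
      ∃ W : Submodule ℝ V, (∀ x ∈ W, f x ∈ W) ∧ finrank ℝ ↥W = 2 * d := by
  intro d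
  induction d with
  | zero =>
    intro V _ _ _ f _
    exact ⟨⊥, by simp, by simp [finrank_bot]⟩
  | succ d IH =>
    intro V _ _ _ f hd
    obtain ⟨U, hUinv, hUrank⟩ := exists_invariant_two (finrank ℝ V) V
      inferInstance inferInstance inferInstance f rfl (by omega)
    have hle : U ≤ U.comap f := fun x hx => hUinv x hx
    have hQrank : finrank ℝ (V ⧸ U) + 2 = finrank ℝ V := by
      have := Submodule.finrank_quotient_add_finrank U
      omega
    obtain ⟨Wb, hWbinv, hWbrank⟩ := IH (V ⧸ U) inferInstance inferInstance inferInstance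
      (U.mapQ U f hle) (by omega)
    refine ⟨Wb.comap U.mkQ, ?_, ?_⟩
    · intro x hx
      have : U.mkQ (f x) = (U.mapQ U f hle) (U.mkQ x) := by
        simp [Submodule.mkQ_apply, Submodule.mapQ_apply]
      have hmem : (U.mapQ U f hle) (U.mkQ x) ∈ Wb := hWbinv _ hx
      simpa [Submodule.mem_comap, this] using hmem
    · rw [finrank_comap_mkQ, hWbrank, hUrank]
      ring

lemma exists_invariant_dim {V : Type} [AddCommGroup V] [Module ℝ V] [FiniteDimensional ℝ V]
    (f : Module.End ℝ V) (m : ℕ) (h : finrank ℝ V = 2 * m + 1) :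
    ∃ W : Submodule ℝ V, (∀ x ∈ W, f x ∈ W) ∧ finrank ℝ ↥W = m := by
  rcases Nat.even_or_odd m with ⟨k, hk⟩ | ⟨k, hk⟩
  · obtain ⟨W, hWinv, hWrank⟩ := exists_invariant_even k V
      inferInstance inferInstance inferInstance f (by omega)
    exact ⟨W, hWinv, by omega⟩
  · -- m odd : use the dual
    obtain ⟨Φ, hΦinv, hΦrank⟩ := exists_invariant_even (k + 1) (Module.Dual ℝ V)
      inferInstance inferInstance inferInstance f.dualMap
      (by rw [Subspace.dual_finrank_eq, h]; omega)
    refine ⟨Φ.dualCoannihilator, ?_, ?_⟩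
    · intro x hx
      rw [Submodule.mem_dualCoannihilator] at hx ⊢
      intro φ hφ
      have := hx _ (hΦinv φ hφ)
      simpa [LinearMap.dualMap_apply] using this
    · have := Subspace.finrank_add_finrank_dualCoannihilator_eq Φ
      rw [h] at this
      omega


/-- finrank of a product of submodules -/
lemma finrank_submodule_prod {M N : Type*} [AddCommGroup M] [Module ℝ M] [AddCommGroup N]
    [Module ℝ N] [FiniteDimensional ℝ M] [FiniteDimensional ℝ N]
    (p : Submodule ℝ M) (q : Submodule ℝ N) :
    finrank ℝ ↥(p.prod q) = finrank ℝ ↥p + finrank ℝ ↥q := by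
  have e : ↥(p.prod q) ≃ₗ[ℝ] ↥p × ↥q :=
    { toFun := fun x => (⟨x.1.1, x.2.1⟩, ⟨x.1.2, x.2.2⟩)
      invFun := fun x => ⟨(x.1.1, x.2.1), ⟨x.1.2, x.2.2⟩⟩
      map_add' := fun a b => rfl
      map_smul' := fun c a => rfl
      left_inv := fun a => rfl
      right_inv := fun a => rfl }
  rw [e.finrank_eq, Module.finrank_prod]

theorem stmt_9 (m : ℕ) (f : Module.End ℝ (Fin (2*m+1) → ℝ)) :
    ∃ E : Module.End ℝ ((Fin (2*m+1) → ℝ) × ℝ),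
      E * E = 1 ∧
      Module.finrank ℝ ↥(Module.End.eigenspace E 1) = m + 1 ∧
      Module.finrank ℝ ↥(Module.End.eigenspace E (-1)) = m + 1 ∧
      (∀ x y, aaBr f (E x) (E y) - E (aaBr f (E x) y + aaBr f x (E y)) + aaBr f x y = 0) ∧
      (∀ u : Fin (2*m+1) → ℝ, (E (u, 0)).2 = 0) := by
  set V := Fin (2*m+1) → ℝ with hVdef
  have hV : finrank ℝ V = 2 * m + 1 := Module.finrank_fin_fun ℝ
  obtain ⟨W, hWinv, hWrank⟩ := exists_invariant_dim f m hV
  obtain ⟨W', hcompl⟩ := W.exists_isCompl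
  have hW'rank : finrank ℝ ↥W' = m + 1 := by
    have := Submodule.finrank_add_eq_of_isCompl hcompl
    rw [hV, hWrank] at this
    omega
  set P : Module.End ℝ V := W.subtype ∘ₗ (Submodule.projectionOnto W W' hcompl) with hP
  have hPmem : ∀ u, P u ∈ W := fun u => SetLike.coe_mem _
  have hPW : ∀ u ∈ W, P u = u := by
    intro u hu
    show W.subtype (Submodule.projectionOnto W W' hcompl u) = u
    rw [show u = ((⟨u, hu⟩ : W) : V) from rfl, Submodule.projectionOnto_apply_left hcompl]
    rfl
  have hPW' : ∀ u ∈ W', P u = 0 := by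
    intro u hu
    show W.subtype (Submodule.projectionOnto W W' hcompl u) = 0
    rw [show u = ((⟨u, hu⟩ : W') : V) from rfl, Submodule.projectionOnto_apply_right hcompl]
    rfl
  have hker : ∀ u, P u = 0 → u ∈ W' := by
    intro u hu
    have hsup : u ∈ W ⊔ W' := by rw [hcompl.sup_eq_top]; trivial
    obtain ⟨a, ha, b, hb, rfl⟩ := Submodule.mem_sup.mp hsup
    have : P (a + b) = a := by rw [map_add, hPW a ha, hPW' b hb, add_zero]
    rw [hu] at this
    rw [← this, zero_add]
    exact hb
  set A : Module.End ℝ V := (2:ℝ) • P - 1 with hA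
  have hAapp : ∀ u, A u = (2:ℝ) • P u - u := by
    intro u; simp [hA, LinearMap.sub_apply, LinearMap.smul_apply, Module.End.one_apply]
  have hAA : ∀ u, A (A u) = u := by
    intro u
    have hPP : P (P u) = P u := hPW _ (hPmem u)
    simp only [hAapp, map_sub, map_smul, hPP]
    module
  set E : Module.End ℝ (V × ℝ) := (A.prodMap (LinearMap.id : ℝ →ₗ[ℝ] ℝ)) with hE
  have hEapp : ∀ z : V × ℝ, E z = (A z.1, z.2) := fun z => rfl
  refine ⟨E, ?_, ?_, ?_, ?_, ?_⟩
  · apply LinearMap.ext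
    intro z
    show E (E z) = z
    rw [hEapp, hEapp]
    exact Prod.ext (hAA z.1) rfl
  · have heig : Module.End.eigenspace E 1 = W.prod ⊤ := by
      ext z
      rw [Module.End.mem_eigenspace_iff, Submodule.mem_prod]
      rw [hEapp, one_smul, Prod.ext_iff]
      dsimp only
      constructor
      · rintro ⟨h1, -⟩
        refine ⟨?_, trivial⟩
        have h2 : (2:ℝ) • P z.1 = (2:ℝ) • z.1 := by
          have := hAapp z.1
          rw [h1] at this
          linear_combination (norm := module) this.symm
        have : P z.1 = z.1 := by
          have := congrArg (fun w => (2:ℝ)⁻¹ • w) h2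
          simpa [smul_smul] using this
        rw [← this]; exact hPmem z.1
      · rintro ⟨h1, -⟩
        refine ⟨?_, rfl⟩
        rw [hAapp, hPW _ h1]
        module
    rw [heig, finrank_submodule_prod, hWrank]
    simp
  · have heig : Module.End.eigenspace E (-1) = W'.prod ⊥ := by
      ext z
      rw [Module.End.mem_eigenspace_iff, Submodule.mem_prod]
      rw [hEapp, Prod.ext_iff]
      dsimp only
      have hsmul : ((-1 : ℝ) • z).1 = -z.1 ∧ ((-1 : ℝ) • z).2 = -z.2 := ⟨by simp, by simp⟩
      constructor
      · rintro ⟨h1, h2⟩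
        rw [hsmul.1] at h1
        rw [hsmul.2] at h2
        have hz2 : z.2 = 0 := by linarith [h2]
        refine ⟨?_, by simpa [Submodule.mem_bot] using hz2⟩
        apply hker
        have := hAapp z.1
        rw [h1] at this
        have h2P : (2:ℝ) • P z.1 = 0 := by
          linear_combination (norm := module) this.symm
        have := congrArg (fun w => (2:ℝ)⁻¹ • w) h2P
        simpa [smul_smul] using this
      · rintro ⟨h1, h2⟩
        have hz2 : z.2 = 0 := by simpa [Submodule.mem_bot] using h2
        constructor
        · rw [hsmul.1, hAapp, hPW' _ h1]
          module
        · rw [hsmul.2, hz2, neg_zero]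
    rw [heig, finrank_submodule_prod, hW'rank]
    simp [finrank_bot]
  · -- Nijenhuis
    have hkey : ∀ w, A (f (A w)) = f (A w) - A (f w) + f w := by
      intro w
      have hsub : P (f (P w)) = f (P w) := hPW _ (hWinv _ (hPmem w))
      simp only [hAapp, map_sub, map_smul, hsub]
      module
    intro x y
    rw [hEapp, hEapp]
    show (_, _) = (0 : V × ℝ)
    rw [Prod.ext_iff]
    constructor
    · show x.2 • f (A y.1) - y.2 • f (A x.1)
          - A ((x.2 • f y.1 - y.2 • f (A x.1)) + (x.2 • f (A y.1) - y.2 • f x.1))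
          + (x.2 • f y.1 - y.2 • f x.1) = 0
      rw [map_add, map_sub, map_sub, map_smul, map_smul, map_smul, map_smul,
        hkey x.1, hkey y.1]
      module
    · simp [aaBr, hEapp]
  · intro u
    simp [hEapp]
end

section
/- Let h be a Lie subalgebra of gl(n,R) and suppose K_h^{(1)} = S^2 U ⊗ span(v) for some nonzero subspace U ⊆ (R^{n-1})* and some v ∈ R^n \ R^{n-1}, and suppose every F ∈ h with F(R^{n-1}) ⊆ span(v) also satisfies F(v) ∈ R^{n-1}. Then the subspace h_1 = {F ∈ h : F(R^{n-1}) = 0} is zero, and there is a unique linear map ν : U → R^{n-1} such that for every α ∈ U, the unique F ∈ h with F|_{R^{n-1}} = α ⊗ v equals α ⊗ v − β ⊗ ν(α), where β ∈ (R^n)* annihilates R^{n-1} and β(v)=1. Moreover ν is either zero or injective. -/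
set_option maxHeartbeats 1000000
set_option maxRecDepth 10000

attribute [local instance 100] LieRing.ofAssociativeRing

theorem stmt_11 {n : ℕ}
    (h : LieSubalgebra ℝ (Module.End ℝ (Fin (n+1) → ℝ)))
    (P : Submodule ℝ (Fin (n+1) → ℝ))
    (hP : P = LinearMap.ker (LinearMap.proj (Fin.last n) : (Fin (n+1) → ℝ) →ₗ[ℝ] ℝ))
    (v : Fin (n+1) → ℝ) (hv : v ∉ P)
    (U : Submodule ℝ (P →ₗ[ℝ] ℝ)) (hU : U ≠ ⊥)
    (hK1 : ∀ D : P →ₗ[ℝ] P →ₗ[ℝ] (Fin (n+1) → ℝ), (∀ u w : P, D u w = D w u) →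
      ((∀ u : P, ∃ F ∈ h, ∀ w : P, F (w : Fin (n+1) → ℝ) = D u w) ↔
        ∃ B : P →ₗ[ℝ] P →ₗ[ℝ] ℝ, (∀ u w : P, B u w = B w u) ∧ (∀ u : P, B u ∈ U) ∧
          ∀ u w : P, D u w = B u w • v))
    (hhv : ∀ F ∈ h, (∀ u : P, ∃ c : ℝ, F (u : Fin (n+1) → ℝ) = c • v) → F v ∈ P) :
    (∀ F ∈ h, (∀ u : P, F (u : Fin (n+1) → ℝ) = 0) → F = 0) ∧
    ∃ ν : U →ₗ[ℝ] (Fin (n+1) → ℝ),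
      (∀ α : U, ν α ∈ P ∧
        ∀ F ∈ h, (∀ u : P, F (u : Fin (n+1) → ℝ) = (α : P →ₗ[ℝ] ℝ) u • v) →
          F v = - ν α) ∧
      (∀ ν' : U →ₗ[ℝ] (Fin (n+1) → ℝ),
        (∀ α : U, ν' α ∈ P ∧
          ∀ F ∈ h, (∀ u : P, F (u : Fin (n+1) → ℝ) = (α : P →ₗ[ℝ] ℝ) u • v) →
            F v = - ν' α) → ν' = ν) ∧
      (ν = 0 ∨ Function.Injective ν) := by
  classical
  have hmem : ∀ x : Fin (n+1) → ℝ, x ∈ P ↔ x (Fin.last n) = 0 := by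
    intro x; rw [hP]; simp [LinearMap.mem_ker]
  have hvlast : v (Fin.last n) ≠ 0 := fun hz => hv ((hmem v).mpr hz)
  -- key lemma
  have key : ∀ (α : P →ₗ[ℝ] ℝ) (u₀ : P), α u₀ ≠ 0 → ∀ w₀ : Fin (n+1) → ℝ, w₀ ∈ P →
      (∃ H ∈ h, ∀ w : P, H (w : Fin (n+1) → ℝ) = α w • w₀) → w₀ = 0 := by
    rintro α u₀ hα w₀ hw₀ ⟨H, hH, hHw⟩
    set D : P →ₗ[ℝ] P →ₗ[ℝ] (Fin (n+1) → ℝ) :=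
      LinearMap.mk₂ ℝ (fun u w => (α u * α w) • w₀)
        (fun m₁ m₂ w => by simp only [map_add, add_mul, add_smul])
        (fun c m w => by simp only [map_smul, smul_eq_mul, mul_assoc, mul_smul])
        (fun m w₁ w₂ => by simp only [map_add, mul_add, add_smul])
        (fun c m w => by simp only [map_smul, smul_eq_mul, mul_left_comm, mul_smul]) with hD
    have hsym : ∀ u w : P, D u w = D w u := by
      intro u w; simp only [hD, LinearMap.mk₂_apply, mul_comm]
    have hex : ∀ u : P, ∃ F ∈ h, ∀ w : P, F (w : Fin (n+1) → ℝ) = D u w := by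
      intro u
      refine ⟨α u • H, h.smul_mem _ hH, fun w => ?_⟩
      simp only [hD, LinearMap.mk₂_apply, LinearMap.smul_apply, hHw w, smul_smul]
    obtain ⟨B, hBsym, hBU, hBD⟩ := (hK1 D hsym).mp hex
    have h1 := congrFun (hBD u₀ u₀) (Fin.last n)
    simp only [hD, LinearMap.mk₂_apply, Pi.smul_apply, smul_eq_mul] at h1
    rw [(hmem w₀).mp hw₀, mul_zero] at h1
    have hB0 : B u₀ u₀ = 0 := by
      rcases mul_eq_zero.mp h1.symm with h' | h'
      · exact h'
      · exact absurd h' hvlast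
    have h2 := hBD u₀ u₀
    rw [hB0, zero_smul] at h2
    simp only [hD, LinearMap.mk₂_apply] at h2
    rcases smul_eq_zero.mp h2 with h' | h'
    · exact absurd (mul_self_eq_zero.mp h') hα
    · exact h'
  -- existence of F_α
  have exist : ∀ α : P →ₗ[ℝ] ℝ, α ∈ U →
      ∃ F ∈ h, ∀ u : P, F (u : Fin (n+1) → ℝ) = α u • v := by
    intro α hαU
    by_cases hα : α = 0
    · exact ⟨0, h.zero_mem, fun u => by simp [hα]⟩
    · obtain ⟨u₀, hu₀⟩ := DFunLike.ne_iff.mp hα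
      simp only [LinearMap.zero_apply] at hu₀
      set D : P →ₗ[ℝ] P →ₗ[ℝ] (Fin (n+1) → ℝ) :=
        LinearMap.mk₂ ℝ (fun u w => (α u * α w) • v)
          (fun m₁ m₂ w => by simp only [map_add, add_mul, add_smul])
          (fun c m w => by simp only [map_smul, smul_eq_mul, mul_assoc, mul_smul])
          (fun m w₁ w₂ => by simp only [map_add, mul_add, add_smul])
          (fun c m w => by simp only [map_smul, smul_eq_mul, mul_left_comm, mul_smul]) with hD
      have hsym : ∀ u w : P, D u w = D w u := by
        intro u w; simp only [hD, LinearMap.mk₂_apply, mul_comm]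
      set B : P →ₗ[ℝ] P →ₗ[ℝ] ℝ :=
        LinearMap.mk₂ ℝ (fun u w => α u * α w)
          (fun m₁ m₂ w => by simp only [map_add, add_mul])
          (fun c m w => by simp only [map_smul, smul_eq_mul, mul_assoc])
          (fun m w₁ w₂ => by simp only [map_add, mul_add])
          (fun c m w => by simp only [map_smul, smul_eq_mul]; ring) with hB
      have hBU : ∀ u : P, B u ∈ U := by
        intro u
        have hBu : B u = α u • α := by
          ext w; simp only [hB, LinearMap.mk₂_apply, LinearMap.smul_apply, smul_eq_mul]
        rw [hBu]; exact U.smul_mem _ hαU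
      obtain ⟨F, hF, hFw⟩ := (hK1 D hsym).mpr
        ⟨B, fun u w => by simp only [hB, LinearMap.mk₂_apply, mul_comm],
          hBU, fun u w => rfl⟩ u₀
      refine ⟨(α u₀)⁻¹ • F, h.smul_mem _ hF, fun w => ?_⟩
      have hth := hFw w
      simp only [hD, LinearMap.mk₂_apply] at hth
      rw [LinearMap.smul_apply, hth, smul_smul, inv_mul_cancel_left₀ hu₀]
  -- a nonzero α₀ ∈ U
  obtain ⟨α₀, hα₀U, hα₀⟩ := Submodule.exists_mem_ne_zero_of_ne_bot hU
  obtain ⟨u₀, hu₀⟩ := DFunLike.ne_iff.mp hα₀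
  simp only [LinearMap.zero_apply] at hu₀
  obtain ⟨G₀, hG₀mem, hG₀⟩ := exist α₀ hα₀U
  -- part 1
  have h1zero : ∀ F ∈ h, (∀ u : P, F (u : Fin (n+1) → ℝ) = 0) → F = 0 := by
    intro F hF hF0
    have hFvP : F v ∈ P := hhv F hF (fun u => ⟨0, by simp [hF0 u]⟩)
    have hbr : ∀ u : P, (⁅F, G₀⁆ : Module.End ℝ (Fin (n+1) → ℝ)) (u : Fin (n+1) → ℝ)
        = α₀ u • F v := by
      intro u
      have hc : (⁅F, G₀⁆ : Module.End ℝ (Fin (n+1) → ℝ)) (u : Fin (n+1) → ℝ)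
          = F (G₀ u) - G₀ (F u) := by
        simp [Ring.lie_def, LinearMap.sub_apply, Module.End.mul_apply]
      rw [hc, hG₀ u, hF0 u, map_zero, map_smul, sub_zero]
    have hFv0 : F v = 0 := key α₀ u₀ hu₀ (F v) hFvP ⟨⁅F, G₀⁆, h.lie_mem hF hG₀mem, hbr⟩
    apply LinearMap.ext; intro x
    rw [LinearMap.zero_apply]
    set c := x (Fin.last n) / v (Fin.last n) with hc
    have hp : x - c • v ∈ P := by
      rw [hmem]
      simp only [Pi.sub_apply, Pi.smul_apply, smul_eq_mul, hc]
      field_simp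
      ring
    have hx : x = (x - c • v) + c • v := by abel
    have h0 : F (x - c • v) = 0 := hF0 ⟨x - c • v, hp⟩
    calc F x = F ((x - c • v) + c • v) := by rw [← hx]
      _ = F (x - c • v) + c • F v := by rw [map_add, map_smul]
      _ = 0 := by rw [h0, hFv0]; simp
  -- construction of ν
  have existU : ∀ α : U, ∃ F, F ∈ h ∧
      ∀ u : P, F (u : Fin (n+1) → ℝ) = (α : P →ₗ[ℝ] ℝ) u • v := fun α => exist α α.2
  choose Fc hFch hFcs using existU
  have uniq : ∀ (α : U) (F : Module.End ℝ (Fin (n+1) → ℝ)), F ∈ h →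
      (∀ u : P, F (u : Fin (n+1) → ℝ) = (α : P →ₗ[ℝ] ℝ) u • v) → F = Fc α := by
    intro α F hF hFs
    have hsub : F - Fc α ∈ h := sub_mem hF (hFch α)
    have hz : F - Fc α = 0 := h1zero _ hsub (fun u => by
      simp [LinearMap.sub_apply, hFs u, hFcs α u])
    exact sub_eq_zero.mp hz
  have hFcvP : ∀ α : U, Fc α v ∈ P := fun α =>
    hhv _ (hFch α) (fun u => ⟨(α : P →ₗ[ℝ] ℝ) u, hFcs α u⟩)
  have hadd : ∀ a b : U, Fc (a + b) = Fc a + Fc b := by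
    intro a b
    refine (uniq (a + b) (Fc a + Fc b) (add_mem (hFch a) (hFch b)) (fun u => ?_)).symm
    simp [LinearMap.add_apply, hFcs a u, hFcs b u, add_smul]
  have hsmul : ∀ (c : ℝ) (a : U), Fc (c • a) = c • Fc a := by
    intro c a
    refine (uniq (c • a) (c • Fc a) (h.smul_mem c (hFch a)) (fun u => ?_)).symm
    simp [hFcs a u, mul_smul]
  set ν : U →ₗ[ℝ] (Fin (n+1) → ℝ) :=
    { toFun := fun α => -(Fc α v)
      map_add' := fun a b => by
        simp only [hadd, LinearMap.add_apply, neg_add]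
      map_smul' := fun c a => by
        simp only [hsmul, LinearMap.smul_apply, RingHom.id_apply, smul_neg] } with hν
  have hνval : ∀ α : U, ν α = -(Fc α v) := fun α => rfl
  have hνspec : ∀ α : U, ν α ∈ P ∧
      ∀ F ∈ h, (∀ u : P, F (u : Fin (n+1) → ℝ) = (α : P →ₗ[ℝ] ℝ) u • v) →
        F v = - ν α := by
    intro α
    constructor
    · rw [hνval]; exact neg_mem (hFcvP α)
    · intro F hF hFs
      rw [uniq α F hF hFs, hνval, neg_neg]
  refine ⟨h1zero, ν, hνspec, ?_, ?_⟩
  · intro ν' hν'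
    refine LinearMap.ext fun α => ?_
    have h1 := (hν' α).2 (Fc α) (hFch α) (hFcs α)
    have h2 := (hνspec α).2 (Fc α) (hFch α) (hFcs α)
    have h3 := h1.symm.trans h2
    simpa using h3
  · by_cases hz : ν = 0
    · exact Or.inl hz
    · refine Or.inr ?_
      suffices hinj : ∀ α : U, ν α = 0 → α = 0 by
        intro a b hab
        have h0 := hinj (a + (-1:ℝ) • b) (by rw [map_add, map_smul, hab]; simp)
        refine Subtype.ext (LinearMap.ext fun u => ?_)
        have := congrArg (fun x : U => (x : P →ₗ[ℝ] ℝ) u) h0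
        simp at this
        linarith
      intro α hαker
      by_contra hαne
      have hνα : ν α = 0 := hαker
      have hFcαv : Fc α v = 0 := by
        have hh := hνval α
        rw [hνα] at hh
        simpa using hh.symm
      have hcne : (α : P →ₗ[ℝ] ℝ) ≠ 0 := by
        intro hc
        exact hαne (Subtype.ext hc)
      obtain ⟨u₁, hu₁⟩ := DFunLike.ne_iff.mp hcne
      simp only [LinearMap.zero_apply] at hu₁
      apply hz
      refine LinearMap.ext fun γ => ?_
      have hbr : ∀ u : P, (⁅Fc α, Fc γ⁆ : Module.End ℝ (Fin (n+1) → ℝ)) (u : Fin (n+1) → ℝ)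
          = (α : P →ₗ[ℝ] ℝ) u • ν γ := by
        intro u
        have hc : (⁅Fc α, Fc γ⁆ : Module.End ℝ (Fin (n+1) → ℝ)) (u : Fin (n+1) → ℝ)
            = Fc α (Fc γ u) - Fc γ (Fc α u) := by
          simp [Ring.lie_def, LinearMap.sub_apply, Module.End.mul_apply]
        rw [hc, hFcs γ u, hFcs α u, map_smul, map_smul, hFcαv, hνval γ]
        simp
      have hγ0 := key (α : P →ₗ[ℝ] ℝ) u₁ hu₁ (ν γ) (hνspec γ).1
        ⟨⁅Fc α, Fc γ⁆, h.lie_mem (hFch α) (hFch γ), hbr⟩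
      rw [hγ0, LinearMap.zero_apply]
end

section
/- Let ω be a nondegenerate skew-symmetric bilinear form on R^{2m} and L ⊆ R^{2m} a Lagrangian subspace (L = L^{⊥ω}, dim L = m). Define h ⊆ gl(2m+1,R) as the set of block matrices (F α^{♯ω}; α 0) where α ranges over the annihilator-forms {ω(u,·) : u ∈ L}, α^{♯ω} is the ω-dual vector, and F ranges over the ω-symmetric endomorphisms of R^{2m} with image contained in L and L contained in the kernel. Then h is closed under the commutator bracket; in fact the bracket of any two such elements is of the form (β⊗α^{♯ω} − α⊗β^{♯ω}, 0; 0, 0) and lies in h. -/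
theorem stmt_12 (m : ℕ)
    (ω : (Fin (2*m) → ℝ) →ₗ[ℝ] (Fin (2*m) → ℝ) →ₗ[ℝ] ℝ)
    (hskew : ∀ x y, ω x y = - ω y x)
    (hnd : ∀ x, (∀ y, ω x y = 0) → x = 0)
    (L : Submodule ℝ (Fin (2*m) → ℝ))
    (hiso : ∀ x ∈ L, ∀ y ∈ L, ω x y = 0)
    (hdim : Module.finrank ℝ ↥L = m)
    (H1 H2 : Module.End ℝ ((Fin (2*m) → ℝ) × ℝ))
    (F1 F2 : Module.End ℝ (Fin (2*m) → ℝ)) (u1 u2 : Fin (2*m) → ℝ)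
    (hu1 : u1 ∈ L) (hu2 : u2 ∈ L)
    (hF1sym : ∀ x y, ω (F1 x) y = ω x (F1 y))
    (hF1im : ∀ x, F1 x ∈ L) (hF1ker : ∀ x ∈ L, F1 x = 0)
    (hF2sym : ∀ x y, ω (F2 x) y = ω x (F2 y))
    (hF2im : ∀ x, F2 x ∈ L) (hF2ker : ∀ x ∈ L, F2 x = 0)
    (hH1 : ∀ x t, H1 (x, t) = (F1 x + t • u1, ω u1 x))
    (hH2 : ∀ x t, H2 (x, t) = (F2 x + t • u2, ω u2 x)) :
    (∀ (x : Fin (2*m) → ℝ) (t : ℝ),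
      (H1 * H2 - H2 * H1) (x, t) = ((ω u2 x) • u1 - (ω u1 x) • u2, 0)) ∧
    ∃ (F : Module.End ℝ (Fin (2*m) → ℝ)) (u : Fin (2*m) → ℝ),
      u ∈ L ∧ (∀ x y, ω (F x) y = ω x (F y)) ∧ (∀ x, F x ∈ L) ∧
      (∀ x ∈ L, F x = 0) ∧
      ∀ (x : Fin (2*m) → ℝ) (t : ℝ),
        (H1 * H2 - H2 * H1) (x, t) = (F x + t • u, ω u x) := by
  have key : ∀ (x : Fin (2*m) → ℝ) (t : ℝ),
      (H1 * H2 - H2 * H1) (x, t) = ((ω u2 x) • u1 - (ω u1 x) • u2, 0) := by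
    intro x t
    have h12 : (H1 * H2) (x, t) = ((ω u2 x) • u1, 0) := by
      show H1 (H2 (x, t)) = _
      rw [hH2, hH1]
      have e1 : F1 (F2 x + t • u2) = 0 := by
        rw [map_add, map_smul, hF1ker _ (hF2im x), hF1ker _ hu2, smul_zero, add_zero]
      have e2 : ω u1 (F2 x + t • u2) = 0 := by
        rw [map_add, map_smul, ← hF2sym, hF2ker _ hu1, map_zero, LinearMap.zero_apply,
          hiso _ hu1 _ hu2, smul_eq_mul, mul_zero, add_zero]
      rw [e1, e2, zero_add]
    have h21 : (H2 * H1) (x, t) = ((ω u1 x) • u2, 0) := by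
      show H2 (H1 (x, t)) = _
      rw [hH1, hH2]
      have e1 : F2 (F1 x + t • u1) = 0 := by
        rw [map_add, map_smul, hF2ker _ (hF1im x), hF2ker _ hu1, smul_zero, add_zero]
      have e2 : ω u2 (F1 x + t • u1) = 0 := by
        rw [map_add, map_smul, ← hF1sym, hF1ker _ hu2, map_zero, LinearMap.zero_apply,
          hiso _ hu2 _ hu1, smul_eq_mul, mul_zero, add_zero]
      rw [e1, e2, zero_add]
    show (H1 * H2) (x, t) - (H2 * H1) (x, t) = _
    rw [h12, h21]
    simp [Prod.ext_iff]
  refine ⟨key, (ω u2).smulRight u1 - (ω u1).smulRight u2, 0, L.zero_mem, ?_, ?_, ?_, ?_⟩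
  · intro x y
    simp only [LinearMap.sub_apply, LinearMap.smulRight_apply, map_sub, map_smul,
      LinearMap.smul_apply, smul_eq_mul]
    rw [hskew u1 y, hskew u2 y, hskew x u1, hskew x u2]
    ring
  · intro x
    exact L.sub_mem (L.smul_mem _ hu1) (L.smul_mem _ hu2)
  · intro x hx
    simp only [LinearMap.sub_apply, LinearMap.smulRight_apply]
    rw [hskew u2 x, hskew u1 x, hiso _ hx _ hu1, hiso _ hx _ hu2]
    simp
  · intro x t
    rw [key x t]
    simp
end

section
/- Let h be a Lie subalgebra of gl(n,R). For every element f of the characteristic subalgebra k̃_h = {F|_{R^{n-1}} : F ∈ h, F(R^{n-1}) ⊆ R^{n-1}}, the almost Abelian Lie algebra g_f = R^{n-1} ⋊_f R admits a bilinear map (connection) ∇ : g_f × g_f → g_f which is (i) torsion-free: ∇_x y − ∇_y x = [x,y] for all x,y; (ii) flat: ∇_x ∇_y z − ∇_y ∇_x z = ∇_{[x,y]} z for all x,y,z; and (iii) compatible with h: ∇_x ∈ h ⊆ End(R^n) for all x, under the identification g_f ≅ R^n determined by the standard special basis. -/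
attribute [local instance 100] LieRing.ofAssociativeRing

theorem stmt_14 {n : ℕ}
    (h : LieSubalgebra ℝ (Module.End ℝ (Fin (n+1) → ℝ)))
    (P : Submodule ℝ (Fin (n+1) → ℝ))
    (hP : P = LinearMap.ker (LinearMap.proj (Fin.last n) : (Fin (n+1) → ℝ) →ₗ[ℝ] ℝ))
    (F : Module.End ℝ (Fin (n+1) → ℝ)) (hF : F ∈ h)
    (hFP : ∀ u ∈ P, F u ∈ P)
    (e : Fin (n+1) → ℝ) (he : e = Pi.single (Fin.last n) 1)
    (br : (Fin (n+1) → ℝ) → (Fin (n+1) → ℝ) → (Fin (n+1) → ℝ))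
    (hbr : ∀ x y, br x y = x (Fin.last n) • F (y - y (Fin.last n) • e)
                        - y (Fin.last n) • F (x - x (Fin.last n) • e)) :
    ∃ D : (Fin (n+1) → ℝ) →ₗ[ℝ] Module.End ℝ (Fin (n+1) → ℝ),
      (∀ x, D x ∈ h) ∧
      (∀ x y, D x y - D y x = br x y) ∧
      (∀ x y z, D x (D y z) - D y (D x z) = D (br x y) z) := by
  refine ⟨(LinearMap.proj (Fin.last n) : (Fin (n+1) → ℝ) →ₗ[ℝ] ℝ).smulRight F, ?_, ?_, ?_⟩
  · intro x
    exact Submodule.smul_mem h.toSubmodule _ hF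
  · intro x y
    have hFe : ∀ z : Fin (n+1) → ℝ, F (z - z (Fin.last n) • e) = F z - z (Fin.last n) • F e := by
      intro z; rw [map_sub, map_smul]
    simp only [hbr, hFe, LinearMap.smulRight_apply, LinearMap.proj_apply, smul_sub, smul_smul,
      mul_comm]
    abel
  · intro x y z
    have hmem : ∀ w : Fin (n+1) → ℝ, w - w (Fin.last n) • e ∈ P := by
      intro w
      rw [hP]
      simp [he, Pi.single_apply]
    have hbrlast : br x y (Fin.last n) = 0 := by
      have h1 := hFP _ (hmem y)
      have h2 := hFP _ (hmem x)
      rw [hP, LinearMap.mem_ker] at h1 h2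
      simp only [LinearMap.proj_apply] at h1 h2
      rw [hbr]
      simp only [Pi.sub_apply, Pi.smul_apply, h1, h2, smul_eq_mul, mul_zero, sub_zero, sub_self]
    simp only [LinearMap.smulRight_apply, LinearMap.proj_apply, LinearMap.smul_apply, map_smul,
      hbrlast, zero_smul, smul_smul, mul_comm, sub_self, LinearMap.zero_apply]
end

section
/- Let h ⊆ gl(n,R) be a Lie subalgebra with K_h^{(1)} = {0} and h_1 = {F ∈ h : F(R^{n-1}) = 0} satisfying h_1 = h_1^{R^{n-1}} := {F ∈ h_1 : F(R^n) ⊆ R^{n-1}}. Define W_h = {F(e_n) : F ∈ h_1} ⊆ R^{n-1}, k̃_h = {F|_{R^{n-1}} : F ∈ h, F(R^{n-1}) ⊆ R^{n-1}}, and F_h = T_1(ker T_2) where for ∇ ∈ D_h := {∇ ∈ (R^n)*⊗h : ∇ symmetric on R^{n-1}×R^{n-1}}, T(∇) = (∇_{e_n} − ∇_{(·)}e_n)|_{R^{n-1}} is split into its End(R^{n-1})-part T_1 and its span(e_n)-part T_2. Then F_h = k̃_h + (R^{n-1})* ⊗ W_h. -/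
attribute [local instance] LieRing.ofAssociativeRing

set_option maxHeartbeats 1000000 in
set_option synthInstance.maxHeartbeats 400000 in
theorem stmt_16 {n : ℕ}
    (h : LieSubalgebra ℝ (Module.End ℝ (Fin (n+1) → ℝ)))
    (P : Submodule ℝ (Fin (n+1) → ℝ))
    (hP : P = LinearMap.ker (LinearMap.proj (Fin.last n) : (Fin (n+1) → ℝ) →ₗ[ℝ] ℝ))
    (e : Fin (n+1) → ℝ) (he : e = Pi.single (Fin.last n) 1)
    (hK1 : ∀ D : P →ₗ[ℝ] P →ₗ[ℝ] (Fin (n+1) → ℝ), (∀ u w : P, D u w = D w u) →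
      (∀ u : P, ∃ F ∈ h, ∀ w : P, F (w : Fin (n+1) → ℝ) = D u w) → D = 0)
    (hh1 : ∀ F ∈ h, (∀ u : P, F (u : Fin (n+1) → ℝ) = 0) → ∀ x, F x ∈ P) :
    ∀ G : P →ₗ[ℝ] (Fin (n+1) → ℝ),
      ((∃ D : (Fin (n+1) → ℝ) →ₗ[ℝ] Module.End ℝ (Fin (n+1) → ℝ),
          (∀ x, D x ∈ h) ∧
          (∀ u w : P, D (u : Fin (n+1) → ℝ) (w : Fin (n+1) → ℝ)
            = D (w : Fin (n+1) → ℝ) (u : Fin (n+1) → ℝ)) ∧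
          (∀ u : P, D e (u : Fin (n+1) → ℝ) - D (u : Fin (n+1) → ℝ) e ∈ P) ∧
          (∀ u : P, G u = D e (u : Fin (n+1) → ℝ) - D (u : Fin (n+1) → ℝ) e)) ↔
        (∃ F ∈ h, (∀ u ∈ P, F u ∈ P) ∧
          ∃ G₂ : P →ₗ[ℝ] (Fin (n+1) → ℝ),
            (∀ u : P, ∃ F₁ ∈ h, (∀ w : P, F₁ (w : Fin (n+1) → ℝ) = 0) ∧ G₂ u = F₁ e) ∧
            ∀ u : P, G u = F (u : Fin (n+1) → ℝ) + G₂ u)) := by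
  have he_last : e (Fin.last n) = 1 := by rw [he]; simp
  have hu_last : ∀ u : P, (u : Fin (n+1) → ℝ) (Fin.last n) = 0 := by
    intro u
    have h2 : ∀ x ∈ P, x (Fin.last n) = 0 := by
      intro x hx
      rw [hP, LinearMap.mem_ker] at hx
      simpa using hx
    exact h2 _ u.2
  intro G
  constructor
  · rintro ⟨D, hD, hsym, hPm, hG⟩
    -- Step 1: D vanishes on P × P, by hK1
    have hzero : ∀ u w : P, D (u : Fin (n+1) → ℝ) (w : Fin (n+1) → ℝ) = 0 := by
      have h0 := hK1 (LinearMap.mk₂ ℝ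
          (fun u w : P => D (u : Fin (n+1) → ℝ) (w : Fin (n+1) → ℝ))
          (by intro u v w; simp)
          (by intro c u w; simp)
          (by intro u v w; simp)
          (by intro c u w; simp))
        (by intro u w; exact hsym u w)
        (fun u => ⟨D (u : Fin (n+1) → ℝ), hD _, fun w => rfl⟩)
      intro u w
      have := LinearMap.congr_fun (LinearMap.congr_fun h0 u) w
      simpa using this
    have hDuP : ∀ (u : P) (x : Fin (n+1) → ℝ), D (u : Fin (n+1) → ℝ) x ∈ P :=
      fun u x => hh1 (D (u : Fin (n+1) → ℝ)) (hD _) (fun w => hzero u w) x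
    refine ⟨D e, hD e, ?_, ?_⟩
    · intro u hu
      have h1 : D e u - D (u : Fin (n+1) → ℝ) e ∈ P := hPm ⟨u, hu⟩
      have h2 : D (u : Fin (n+1) → ℝ) e ∈ P := hDuP ⟨u, hu⟩ e
      have : D e u = (D e u - D (u : Fin (n+1) → ℝ) e) + D (u : Fin (n+1) → ℝ) e := by
        abel
      rw [this]
      exact P.add_mem h1 h2
    · refine ⟨{ toFun := fun u => - D (u : Fin (n+1) → ℝ) e,
                map_add' := by intro a b; simp; abel,
                map_smul' := by intro c a; simp }, ?_, ?_⟩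
      · intro u
        refine ⟨-(D (u : Fin (n+1) → ℝ)), neg_mem (hD _), fun w => by simp [hzero u w], by simp⟩
      · intro u
        have := hG u
        simp only [LinearMap.coe_mk, AddHom.coe_mk]
        rw [this]
        abel
  · rintro ⟨F, hF, hFP, G₂, hG₂, hG⟩
    -- the space h₁ of elements of h vanishing on P
    set S : Submodule ℝ (Module.End ℝ (Fin (n+1) → ℝ)) :=
      { carrier := {A | A ∈ h ∧ ∀ u : P, A (u : Fin (n+1) → ℝ) = 0}
        add_mem' := fun {a b} ha hb => ⟨h.add_mem ha.1 hb.1, fun u => by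
          simp [ha.2 u, hb.2 u]⟩
        zero_mem' := ⟨h.zero_mem, fun u => rfl⟩
        smul_mem' := fun c a ha => ⟨h.smul_mem c ha.1, fun u => by
          simp [ha.2 u]⟩ } with hS
    -- evaluation at e
    set φ : S →ₗ[ℝ] (Fin (n+1) → ℝ) :=
      { toFun := fun A => (A : Module.End ℝ (Fin (n+1) → ℝ)) e
        map_add' := fun a b => rfl
        map_smul' := fun c a => rfl } with hφ
    have hmem : ∀ u : P, G₂ u ∈ LinearMap.range φ := by
      intro u
      obtain ⟨F₁, hF₁, hvan, hGu⟩ := hG₂ u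
      exact ⟨⟨F₁, hF₁, hvan⟩, hGu.symm⟩
    set G₂' : P →ₗ[ℝ] LinearMap.range φ := LinearMap.codRestrict _ G₂ hmem with hG₂'
    obtain ⟨σ, hσ⟩ := (φ.rangeRestrict).exists_rightInverse_of_surjective
      (LinearMap.range_eq_top.mpr φ.surjective_rangeRestrict)
    set C : P →ₗ[ℝ] S := σ.comp G₂' with hC
    have hCval : ∀ u : P, (C u : Module.End ℝ (Fin (n+1) → ℝ)) e = G₂ u := by
      intro u
      have h1 : φ.rangeRestrict (σ (G₂' u)) = G₂' u := LinearMap.congr_fun hσ (G₂' u)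
      have h2 := congrArg (Subtype.val) h1
      exact h2
    -- projection onto P
    set p : (Fin (n+1) → ℝ) →ₗ[ℝ] (Fin (n+1) → ℝ) :=
      LinearMap.id - (LinearMap.proj (Fin.last n)).smulRight e with hp
    have hpP : ∀ x, p x ∈ P := by
      intro x
      rw [hP, LinearMap.mem_ker]
      simp [hp, he_last]
    set pP : (Fin (n+1) → ℝ) →ₗ[ℝ] P := LinearMap.codRestrict P p hpP with hpPdef
    set D : (Fin (n+1) → ℝ) →ₗ[ℝ] Module.End ℝ (Fin (n+1) → ℝ) :=
      (LinearMap.proj (Fin.last n) : (Fin (n+1) → ℝ) →ₗ[ℝ] ℝ).smulRight F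
        - S.subtype.comp (C.comp pP) with hDdef
    have hDu : ∀ u : P, D (u : Fin (n+1) → ℝ) = -(C u : Module.End ℝ (Fin (n+1) → ℝ)) := by
      intro u
      have hpu : pP (u : Fin (n+1) → ℝ) = u := by
        apply Subtype.ext
        simp [hpPdef, hp, hu_last u]
      simp [hDdef, hu_last u, hpu]
    have hDe : D e = F := by
      have hpe : pP e = 0 := by
        apply Subtype.ext
        simp [hpPdef, hp, he_last]
      simp [hDdef, he_last, hpe]
    have hGmemP : ∀ u : P, G₂ u ∈ P := by
      intro u
      obtain ⟨F₁, hF₁, hvan, hGu⟩ := hG₂ u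
      rw [hGu]
      exact hh1 F₁ hF₁ hvan e
    have hkey : ∀ u : P, D e (u : Fin (n+1) → ℝ) - D (u : Fin (n+1) → ℝ) e
        = F (u : Fin (n+1) → ℝ) + G₂ u := by
      intro u
      rw [hDe, hDu u]
      simp [hCval u]
    refine ⟨D, ?_, ?_, ?_, ?_⟩
    · intro x
      have hmem' : (C (pP x) : Module.End ℝ (Fin (n+1) → ℝ)) ∈ h := (C (pP x)).2.1
      have : D x = (x (Fin.last n)) • F - (C (pP x) : Module.End ℝ (Fin (n+1) → ℝ)) := rfl
      rw [this]
      exact h.sub_mem (h.smul_mem _ hF) hmem'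
    · intro u w
      rw [hDu u, hDu w]
      simp [(C u).2.2 w, (C w).2.2 u]
    · intro u
      rw [hkey u]
      exact P.add_mem (hFP _ u.2) (hGmemP u)
    · intro u
      rw [hkey u]
      exact hG u
end

section
/- Let h ⊆ gl(n,R) be an elliptic Lie subalgebra (no nonzero element of rank ≤ 1) with K_h^{(1)} = {0}. Then F_h = k̃_h, where F_h = T_1(ker T_2) as defined from the space D_h of h-valued 'pre-connections' symmetric on R^{n-1}, and k̃_h = {F|_{R^{n-1}} : F ∈ h, F(R^{n-1}) ⊆ R^{n-1}}. Consequently every ∇ ∈ D_h with (∇_{e_n} − ∇_{(·)}e_n)(R^{n-1}) ⊆ R^{n-1} has (∇_{e_n} − ∇_{(·)}e_n)|_{R^{n-1}} ∈ k̃_h. -/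
attribute [local instance 100] LieRing.ofAssociativeRing

theorem stmt_17 {n : ℕ}
    (h : LieSubalgebra ℝ (Module.End ℝ (Fin (n+1) → ℝ)))
    (P : Submodule ℝ (Fin (n+1) → ℝ))
    (hP : P = LinearMap.ker (LinearMap.proj (Fin.last n) : (Fin (n+1) → ℝ) →ₗ[ℝ] ℝ))
    (e : Fin (n+1) → ℝ) (he : e = Pi.single (Fin.last n) 1)
    (hK1 : ∀ D : P →ₗ[ℝ] P →ₗ[ℝ] (Fin (n+1) → ℝ), (∀ u w : P, D u w = D w u) →
      (∀ u : P, ∃ F ∈ h, ∀ w : P, F (w : Fin (n+1) → ℝ) = D u w) → D = 0)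
    (hell : ∀ F ∈ h, Module.finrank ℝ ↥(LinearMap.range F) ≤ 1 → F = 0) :
    (∀ G : P →ₗ[ℝ] (Fin (n+1) → ℝ),
      ((∃ D : (Fin (n+1) → ℝ) →ₗ[ℝ] Module.End ℝ (Fin (n+1) → ℝ),
          (∀ x, D x ∈ h) ∧
          (∀ u w : P, D (u : Fin (n+1) → ℝ) (w : Fin (n+1) → ℝ)
            = D (w : Fin (n+1) → ℝ) (u : Fin (n+1) → ℝ)) ∧
          (∀ u : P, D e (u : Fin (n+1) → ℝ) - D (u : Fin (n+1) → ℝ) e ∈ P) ∧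
          (∀ u : P, G u = D e (u : Fin (n+1) → ℝ) - D (u : Fin (n+1) → ℝ) e)) ↔
        (∃ F ∈ h, (∀ u ∈ P, F u ∈ P) ∧ ∀ u : P, G u = F (u : Fin (n+1) → ℝ)))) ∧
    (∀ D : (Fin (n+1) → ℝ) →ₗ[ℝ] Module.End ℝ (Fin (n+1) → ℝ),
      (∀ x, D x ∈ h) →
      (∀ u w : P, D (u : Fin (n+1) → ℝ) (w : Fin (n+1) → ℝ)
        = D (w : Fin (n+1) → ℝ) (u : Fin (n+1) → ℝ)) →
      (∀ u : P, D e (u : Fin (n+1) → ℝ) - D (u : Fin (n+1) → ℝ) e ∈ P) →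
      ∃ F ∈ h, (∀ u ∈ P, F u ∈ P) ∧
        ∀ u : P, D e (u : Fin (n+1) → ℝ) - D (u : Fin (n+1) → ℝ) e
          = F (u : Fin (n+1) → ℝ)) := by
  have hPmem : ∀ x : Fin (n+1) → ℝ, x ∈ P ↔ x (Fin.last n) = 0 := by
    intro x; rw [hP]; exact Iff.rfl
  have heval : e (Fin.last n) = 1 := by simp [he]
  have hePmem : ∀ x : Fin (n+1) → ℝ, x - x (Fin.last n) • e ∈ P := by
    intro x; rw [hPmem]; simp [heval]
  -- key forward lemma
  have key : ∀ D : (Fin (n+1) → ℝ) →ₗ[ℝ] Module.End ℝ (Fin (n+1) → ℝ),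
      (∀ x, D x ∈ h) →
      (∀ u w : P, D (u : Fin (n+1) → ℝ) (w : Fin (n+1) → ℝ)
        = D (w : Fin (n+1) → ℝ) (u : Fin (n+1) → ℝ)) →
      (∀ u : P, D e (u : Fin (n+1) → ℝ) - D (u : Fin (n+1) → ℝ) e ∈ P) →
      ∃ F ∈ h, (∀ u ∈ P, F u ∈ P) ∧
        ∀ u : P, D e (u : Fin (n+1) → ℝ) - D (u : Fin (n+1) → ℝ) e
          = F (u : Fin (n+1) → ℝ) := by
    intro D hDh hsym hin
    -- the restricted bilinear map vanishes by hK1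
    set D' : P →ₗ[ℝ] P →ₗ[ℝ] (Fin (n+1) → ℝ) :=
      (LinearMap.lcomp ℝ _ P.subtype).comp (D.comp P.subtype) with hD'
    have h0 : D' = 0 := by
      apply hK1
      · intro u w; exact hsym u w
      · intro u; exact ⟨D u, hDh u, fun w => rfl⟩
    have hw : ∀ u w : P, D (u : Fin (n+1) → ℝ) (w : Fin (n+1) → ℝ) = 0 := by
      intro u w
      have : D' u w = 0 := by rw [h0]; rfl
      simpa [hD', LinearMap.lcomp_apply] using this
    have hzero : ∀ u : P, D (u : Fin (n+1) → ℝ) = 0 := by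
      intro u
      apply hell _ (hDh (u : Fin (n+1) → ℝ))
      have hle : LinearMap.range (D (u : Fin (n+1) → ℝ)) ≤
          Submodule.span ℝ {D (u : Fin (n+1) → ℝ) e} := by
        rintro y ⟨x, rfl⟩
        have hx : (D (u : Fin (n+1) → ℝ)) (x - x (Fin.last n) • e) = 0 :=
          hw u ⟨_, hePmem x⟩
        have : (D (u : Fin (n+1) → ℝ)) x
            = x (Fin.last n) • (D (u : Fin (n+1) → ℝ)) e := by
          have := hx
          rw [map_sub, map_smul, sub_eq_zero] at this
          simpa using this
        rw [this]
        exact Submodule.smul_mem _ _ (Submodule.mem_span_singleton_self _)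
      calc Module.finrank ℝ ↥(LinearMap.range (D (u : Fin (n+1) → ℝ)))
          ≤ Module.finrank ℝ ↥(Submodule.span ℝ {D (u : Fin (n+1) → ℝ) e}) :=
            Submodule.finrank_mono hle
        _ ≤ 1 := by
            simpa using finrank_span_le_card ({D (u : Fin (n+1) → ℝ) e} :
              Set (Fin (n+1) → ℝ))
    refine ⟨D e, hDh e, ?_, ?_⟩
    · intro u hu
      have h1 := hin ⟨u, hu⟩
      have h2 : D u e = 0 := by rw [hzero ⟨u, hu⟩]; rfl
      simpa [h2] using h1
    · intro u
      have h2 : D (u : Fin (n+1) → ℝ) e = 0 := by rw [hzero u]; rfl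
      simp [h2]
  constructor
  · intro G
    constructor
    · rintro ⟨D, hDh, hsym, hin, hG⟩
      obtain ⟨F, hFh, hFP, hFeq⟩ := key D hDh hsym hin
      exact ⟨F, hFh, hFP, fun u => (hG u).trans (hFeq u)⟩
    · rintro ⟨F, hFh, hFP, hG⟩
      refine ⟨(LinearMap.proj (Fin.last n) : (Fin (n+1) → ℝ) →ₗ[ℝ] ℝ).smulRight F,
        ?_, ?_, ?_, ?_⟩
      · intro x
        exact h.smul_mem _ hFh
      · intro u w
        have hu : (u : Fin (n+1) → ℝ) (Fin.last n) = 0 := (hPmem u).1 u.2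
        have hwp : (w : Fin (n+1) → ℝ) (Fin.last n) = 0 := (hPmem w).1 w.2
        simp [LinearMap.smulRight_apply, hu, hwp]
      · intro u
        have hu : (u : Fin (n+1) → ℝ) (Fin.last n) = 0 := (hPmem u).1 u.2
        simp only [LinearMap.smulRight_apply, LinearMap.proj_apply, heval, hu,
          one_smul, zero_smul]
        simpa using hFP u u.2
      · intro u
        have hu : (u : Fin (n+1) → ℝ) (Fin.last n) = 0 := (hPmem u).1 u.2
        simp [LinearMap.smulRight_apply, heval, hu, hG u]
  · exact key
end

section
/- Let H be a Lie subgroup of GL(n,R) with Lie algebra h and let K̃_H = {h|_{R^{n-1}} : h ∈ H, h(R^{n-1}) = R^{n-1}} acting on End(R^{n-1}) by conjugation. Then the subspace F_h = T_1(ker T_2) ⊆ End(R^{n-1}) is invariant under conjugation by elements of K̃_H: if k ∈ GL(n-1,R) arises as the restriction of some h ∈ H preserving R^{n-1}, and F ∈ F_h, then k^{-1} ∘ F ∘ k ∈ F_h. -/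
attribute [local instance 100] LieRing.ofAssociativeRing

theorem stmt_18 {n : ℕ}
    (H : Subgroup (Module.End ℝ (Fin (n+1) → ℝ))ˣ)
    (h : LieSubalgebra ℝ (Module.End ℝ (Fin (n+1) → ℝ)))
    (hAd : ∀ a ∈ H, ∀ F ∈ h,
      (↑a⁻¹ : Module.End ℝ (Fin (n+1) → ℝ)) * F * (↑a : Module.End ℝ (Fin (n+1) → ℝ)) ∈ h)
    (P : Submodule ℝ (Fin (n+1) → ℝ))
    (hP : P = LinearMap.ker (LinearMap.proj (Fin.last n) : (Fin (n+1) → ℝ) →ₗ[ℝ] ℝ))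
    (e : Fin (n+1) → ℝ) (he : e = Pi.single (Fin.last n) 1)
    (a : (Module.End ℝ (Fin (n+1) → ℝ))ˣ) (haH : a ∈ H)
    (haP : ∀ x ∈ P, (↑a : Module.End ℝ (Fin (n+1) → ℝ)) x ∈ P)
    (haP' : ∀ x ∈ P, (↑a⁻¹ : Module.End ℝ (Fin (n+1) → ℝ)) x ∈ P) :
    ∀ F G : P →ₗ[ℝ] (Fin (n+1) → ℝ),
      (∃ D : (Fin (n+1) → ℝ) →ₗ[ℝ] Module.End ℝ (Fin (n+1) → ℝ),
        (∀ x, D x ∈ h) ∧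
        (∀ u w : P, D (u : Fin (n+1) → ℝ) (w : Fin (n+1) → ℝ)
          = D (w : Fin (n+1) → ℝ) (u : Fin (n+1) → ℝ)) ∧
        (∀ u : P, D e (u : Fin (n+1) → ℝ) - D (u : Fin (n+1) → ℝ) e ∈ P) ∧
        (∀ u : P, F u = D e (u : Fin (n+1) → ℝ) - D (u : Fin (n+1) → ℝ) e)) →
      (∀ u : P, (↑a : Module.End ℝ (Fin (n+1) → ℝ)) (G u)
        = F ⟨(↑a : Module.End ℝ (Fin (n+1) → ℝ)) (u : Fin (n+1) → ℝ), haP _ u.2⟩) →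
      (∃ D : (Fin (n+1) → ℝ) →ₗ[ℝ] Module.End ℝ (Fin (n+1) → ℝ),
        (∀ x, D x ∈ h) ∧
        (∀ u w : P, D (u : Fin (n+1) → ℝ) (w : Fin (n+1) → ℝ)
          = D (w : Fin (n+1) → ℝ) (u : Fin (n+1) → ℝ)) ∧
        (∀ u : P, D e (u : Fin (n+1) → ℝ) - D (u : Fin (n+1) → ℝ) e ∈ P) ∧
        (∀ u : P, G u = D e (u : Fin (n+1) → ℝ) - D (u : Fin (n+1) → ℝ) e)) := by
  intro F G hF hG
  obtain ⟨D, hDh, hDsym, hDP, hDF⟩ := hF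
  set A : Module.End ℝ (Fin (n+1) → ℝ) := (↑a : Module.End ℝ (Fin (n+1) → ℝ)) with hA
  set B : Module.End ℝ (Fin (n+1) → ℝ) := (↑a⁻¹ : Module.End ℝ (Fin (n+1) → ℝ)) with hB
  have hBA : ∀ x, B (A x) = x := by
    intro x
    have h1 : B * A = 1 := by rw [hA, hB]; exact_mod_cast a.inv_mul
    calc B (A x) = (B * A) x := rfl
      _ = x := by rw [h1]; rfl
  have hAB : ∀ x, A (B x) = x := by
    intro x
    have h1 : A * B = 1 := by rw [hA, hB]; exact_mod_cast a.mul_inv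
    calc A (B x) = (A * B) x := rfl
      _ = x := by rw [h1]; rfl
  have hPmem : ∀ x : Fin (n+1) → ℝ, x ∈ P ↔ x (Fin.last n) = 0 := by
    intro x; rw [hP]; simp [LinearMap.mem_ker]
  set v : Fin (n+1) → ℝ := B e with hv
  set c : ℝ := v (Fin.last n) with hc
  have hcne : c ≠ 0 := by
    intro h0
    have hvP : v ∈ P := (hPmem v).2 h0
    have h1 : A v ∈ P := haP _ hvP
    rw [hv, hAB] at h1
    have := (hPmem e).1 h1
    rw [he] at this; simp at this
  set q : Fin (n+1) → ℝ := v - c • e with hq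
  have hqP : q ∈ P := by
    rw [hPmem]
    simp [hq, he, hc]
  have hev : e = c⁻¹ • v - c⁻¹ • q := by
    rw [hq]
    rw [smul_sub, smul_smul, inv_mul_cancel₀ hcne]
    simp
  set conj : Module.End ℝ (Fin (n+1) → ℝ) →ₗ[ℝ] Module.End ℝ (Fin (n+1) → ℝ) :=
    (LinearMap.mulRight ℝ A).comp (LinearMap.mulLeft ℝ B) with hconj
  set D' : (Fin (n+1) → ℝ) →ₗ[ℝ] Module.End ℝ (Fin (n+1) → ℝ) := conj.comp (D.comp A) with hD'
  have hD'apply : ∀ x y, D' x y = B (D (A x) (A y)) := fun x y => rfl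
  -- symmetry of D' on P × P
  have hD'sym : ∀ x y : Fin (n+1) → ℝ, x ∈ P → y ∈ P → D' x y = D' y x := by
    intro x y hx hy
    rw [hD'apply, hD'apply]
    congr 1
    exact hDsym ⟨A x, haP _ hx⟩ ⟨A y, haP _ hy⟩
  -- G u lies in P
  have hGP : ∀ u : P, (G u : Fin (n+1) → ℝ) ∈ P := by
    intro u
    have h1 : F ⟨A u, haP _ u.2⟩ ∈ P := by
      rw [hDF ⟨A u, haP _ u.2⟩]
      exact hDP _
    have h2 : G u = B (F ⟨A u, haP _ u.2⟩) := by
      rw [← hG u, hBA]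
    rw [h2]
    exact haP' _ h1
  -- key computation
  have key : ∀ u : P, (c • D') e (u : Fin (n+1) → ℝ) - (c • D') (u : Fin (n+1) → ℝ) e = G u := by
    intro u
    have h1 : D' e (u : Fin (n+1) → ℝ) - D' (u : Fin (n+1) → ℝ) e
        = c⁻¹ • (D' v u - D' u v) - c⁻¹ • (D' q u - D' u q) := by
      have he1 : D' e (u : Fin (n+1) → ℝ)
          = c⁻¹ • D' v u - c⁻¹ • D' q u := by
        conv_lhs => rw [hev]
        simp [map_sub, map_smul]
      have he2 : D' (u : Fin (n+1) → ℝ) e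
          = c⁻¹ • D' u v - c⁻¹ • D' u q := by
        conv_lhs => rw [hev]
        simp [map_sub, map_smul]
      rw [he1, he2, smul_sub, smul_sub]
      abel
    have h2 : D' q (u : Fin (n+1) → ℝ) - D' (u : Fin (n+1) → ℝ) q = 0 := by
      rw [hD'sym q u hqP u.2, sub_self]
    have h3 : D' v (u : Fin (n+1) → ℝ) - D' (u : Fin (n+1) → ℝ) v = G u := by
      rw [hD'apply, hD'apply]
      have hAv : A v = e := by rw [hv, hAB]
      rw [hAv, ← map_sub, ← hDF ⟨A u, haP _ u.2⟩, ← hG u, hBA]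
    have hLHS : (c • D') e (u : Fin (n+1) → ℝ) - (c • D') (u : Fin (n+1) → ℝ) e
        = c • (D' e (u : Fin (n+1) → ℝ) - D' (u : Fin (n+1) → ℝ) e) := by
      simp [smul_sub]
    rw [hLHS, h1, h2, h3]
    rw [smul_sub, smul_smul, mul_inv_cancel₀ hcne]
    simp
  refine ⟨c • D', ?_, ?_, ?_, ?_⟩
  · intro x
    have h1 : D' x ∈ h := by
      have : D' x = B * D (A x) * A := rfl
      rw [this, hA, hB]
      exact hAd a haH (D (A x)) (hDh _)
    have h2 : (c • D') x = c • D' x := rfl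
    rw [h2]
    exact h.smul_mem c h1
  · intro u w
    have h2 : ∀ x y, (c • D') x y = c • D' x y := fun _ _ => rfl
    rw [h2, h2, hD'sym u w u.2 w.2]
  · intro u
    rw [key u]
    exact hGP u
  · intro u
    rw [key u]
end
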